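/- arXiv:1004.2170 — 9 statements merged into one kernel-verified Lean document; each statement's English description precedes it below -/
import Mathlib

section
/- For every n ≥ 2, every coordinate index i with 1 ≤ i ≤ n, and every triple of pairwise distinct points x₁, x₂, x₃ ∈ ℝⁿ, one has p_i(x₁,x₂,x₃) ≥ 0. -/
/-- The symmetrization quantity `p_i(x₁,x₂,x₃)`: the sum, over the three choices of a
"vertex" among the three points, of the product of the `i`-th components of the scalar
Riesz kernels of homogeneity `-1` evaluated at the two differences from the vertex. -/
noncomputable def rieszSym {n : ℕ} (i : Fin n) (x₁ x₂ x₃ : EuclideanSpace ℝ (Fin n)) : ℝ :=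
    ((x₂ - x₁) i / ‖x₂ - x₁‖ ^ 2) * ((x₃ - x₁) i / ‖x₃ - x₁‖ ^ 2) +
    ((x₁ - x₂) i / ‖x₁ - x₂‖ ^ 2) * ((x₃ - x₂) i / ‖x₃ - x₂‖ ^ 2) +
    ((x₁ - x₃) i / ‖x₁ - x₃‖ ^ 2) * ((x₂ - x₃) i / ‖x₂ - x₃‖ ^ 2)

/-- For every `n ≥ 2`, every coordinate `i`, and pairwise distinct points
`x₁, x₂, x₃ ∈ ℝⁿ`, one has `p_i(x₁,x₂,x₃) ≥ 0`. -/
theorem rieszSym_nonneg (n : ℕ) (hn : 2 ≤ n) (i : Fin n)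
    (x₁ x₂ x₃ : EuclideanSpace ℝ (Fin n))
    (h₁₂ : x₁ ≠ x₂) (h₁₃ : x₁ ≠ x₃) (h₂₃ : x₂ ≠ x₃) :
    0 ≤ rieszSym i x₁ x₂ x₃ := by
  set a : EuclideanSpace ℝ (Fin n) := x₂ - x₁ with ha
  set b : EuclideanSpace ℝ (Fin n) := x₃ - x₁ with hb
  have e1 : x₁ - x₂ = -a := by rw [ha]; abel
  have e2 : x₃ - x₂ = b - a := by rw [ha, hb]; abel
  have e3 : x₁ - x₃ = -b := by rw [hb]; abel
  have e4 : x₂ - x₃ = -(b - a) := by rw [ha, hb]; abel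
  have hane : a ≠ 0 := sub_ne_zero.mpr (Ne.symm h₁₂)
  have hbne : b ≠ 0 := sub_ne_zero.mpr (Ne.symm h₁₃)
  have hcne : b - a ≠ 0 := by
    rw [ha, hb]
    intro h
    exact h₂₃ ((sub_left_inj.mp (sub_eq_zero.mp h)).symm)
  have hA : (0:ℝ) < ‖a‖ ^ 2 := pow_pos (norm_pos_iff.mpr hane) 2
  have hB : (0:ℝ) < ‖b‖ ^ 2 := pow_pos (norm_pos_iff.mpr hbne) 2
  have hC : (0:ℝ) < ‖b - a‖ ^ 2 := pow_pos (norm_pos_iff.mpr hcne) 2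
  have hCab : ‖b - a‖ ^ 2 = ‖b‖ ^ 2 - 2 * inner ℝ b a + ‖a‖ ^ 2 :=
    norm_sub_sq_real b a
  have hCS1 : inner ℝ b a ≤ ‖b‖ * ‖a‖ := real_inner_le_norm b a
  have hCS2 : -(‖b‖ * ‖a‖) ≤ inner ℝ b a := neg_le_of_abs_le (abs_real_inner_le_norm b a)
  set u : ℝ := a i with hu
  set v : ℝ := b i with hv
  have hw : (b - a) i = v - u := by simp [hu, hv]
  rw [rieszSym, e1, e2, e3, e4, hw]
  simp only [norm_neg, PiLp.neg_apply, hw]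
  rw [div_mul_div_comm, div_mul_div_comm, div_mul_div_comm]
  have key : 0 ≤ (u * v * (‖b - a‖^2) + (-u * (v - u)) * ‖b‖^2 + (-v * -(v - u)) * ‖a‖^2) := by
    rw [hCab]
    have hna : 0 < ‖a‖ := norm_pos_iff.mpr hane
    have hnb : 0 < ‖b‖ := norm_pos_iff.mpr hbne
    nlinarith [sq_nonneg (u * ‖b‖ - v * ‖a‖), sq_nonneg (u * ‖b‖ + v * ‖a‖),
      mul_pos hnb hna,
      mul_nonneg (sq_nonneg (u * ‖b‖ - v * ‖a‖)) (sub_nonneg.mpr hCS1),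
      mul_nonneg (sq_nonneg (u * ‖b‖ + v * ‖a‖)) (show (0:ℝ) ≤ ‖b‖ * ‖a‖ + inner ℝ b a by linarith)]
  have expand : u * v / (‖a‖^2 * ‖b‖^2) + -u * (v - u) / (‖a‖^2 * ‖b - a‖^2) +
      -v * -(v - u) / (‖b‖^2 * ‖b - a‖^2)
      = (u * v * (‖b - a‖^2) + (-u * (v - u)) * ‖b‖^2 + (-v * -(v - u)) * ‖a‖^2) /
        (‖a‖^2 * ‖b‖^2 * ‖b - a‖^2) := by
    field_simp
  rw [expand]
  positivity
end

section
/- Let x₁, x₂, x₃ ∈ ℝⁿ be pairwise distinct and set a = x₂ − x₁ and b = x₃ − x₂. Then for every coordinate index i, p_i(x₁,x₂,x₃) = (Σ_{j=1}^{n} (a_i b_j − b_i a_j)²) / (|a|² |b|² |a+b|²), and moreover the terms with j = i vanish, so the sum may be taken over j ≠ i. -/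
/-- With `a = x₂ - x₁` and `b = x₃ - x₂`, one has
`p_i(x₁,x₂,x₃) = (Σ_j (a_i b_j − b_i a_j)²) / (|a|²|b|²|a+b|²)`, and the terms with
`j = i` vanish, so the sum may be taken over `j ≠ i`. -/
theorem rieszSym_eq_sum_sq_div (n : ℕ) (x₁ x₂ x₃ : EuclideanSpace ℝ (Fin n))
    (h₁₂ : x₁ ≠ x₂) (h₁₃ : x₁ ≠ x₃) (h₂₃ : x₂ ≠ x₃) (i : Fin n) :
    rieszSym i x₁ x₂ x₃ =
      (∑ j : Fin n,
          ((x₂ - x₁) i * (x₃ - x₂) j - (x₃ - x₂) i * (x₂ - x₁) j) ^ 2) /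
        (‖x₂ - x₁‖ ^ 2 * ‖x₃ - x₂‖ ^ 2 * ‖(x₂ - x₁) + (x₃ - x₂)‖ ^ 2) ∧
    rieszSym i x₁ x₂ x₃ =
      (∑ j ∈ Finset.univ.filter (fun j => j ≠ i),
          ((x₂ - x₁) i * (x₃ - x₂) j - (x₃ - x₂) i * (x₂ - x₁) j) ^ 2) /
        (‖x₂ - x₁‖ ^ 2 * ‖x₃ - x₂‖ ^ 2 * ‖(x₂ - x₁) + (x₃ - x₂)‖ ^ 2) := by
  set a : EuclideanSpace ℝ (Fin n) := x₂ - x₁ with ha_def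
  set b : EuclideanSpace ℝ (Fin n) := x₃ - x₂ with hb_def
  have e13 : x₃ - x₁ = a + b := by rw [ha_def, hb_def]; abel
  have e21 : x₁ - x₂ = -a := by rw [ha_def]; abel
  have e31 : x₁ - x₃ = -(a + b) := by rw [ha_def, hb_def]; abel
  have e32 : x₂ - x₃ = -b := by rw [hb_def]; abel
  have ha : a ≠ 0 := sub_ne_zero.mpr (Ne.symm h₁₂)
  have hb : b ≠ 0 := sub_ne_zero.mpr (Ne.symm h₂₃)
  have hab : a + b ≠ 0 := by rw [← e13]; exact sub_ne_zero.mpr (Ne.symm h₁₃)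
  have hA : (0:ℝ) < ‖a‖ ^ 2 := pow_pos (norm_pos_iff.mpr ha) 2
  have hB : (0:ℝ) < ‖b‖ ^ 2 := pow_pos (norm_pos_iff.mpr hb) 2
  have hC : (0:ℝ) < ‖a + b‖ ^ 2 := pow_pos (norm_pos_iff.mpr hab) 2
  have hSa : ‖a‖ ^ 2 = ∑ j, a j ^ 2 := by
    rw [EuclideanSpace.norm_eq, Real.sq_sqrt (Finset.sum_nonneg fun j _ => by positivity)]
    simp only [Real.norm_eq_abs, sq_abs]
  have hSb : ‖b‖ ^ 2 = ∑ j, b j ^ 2 := by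
    rw [EuclideanSpace.norm_eq, Real.sq_sqrt (Finset.sum_nonneg fun j _ => by positivity)]
    simp only [Real.norm_eq_abs, sq_abs]
  have hIP : (inner ℝ a b : ℝ) = ∑ j, a j * b j := by
    simp [PiLp.inner_apply, RCLike.inner_apply, mul_comm]
  have hCexp : ‖a + b‖ ^ 2 = ‖a‖ ^ 2 + 2 * (∑ j, a j * b j) + ‖b‖ ^ 2 := by
    rw [← hIP]; exact norm_add_sq_real a b
  have hN : ∑ j, (a i * b j - b i * a j) ^ 2
      = a i ^ 2 * ‖b‖ ^ 2 + b i ^ 2 * ‖a‖ ^ 2 - 2 * (a i * b i) * (∑ j, a j * b j) := by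
    rw [hSa, hSb, Finset.mul_sum, Finset.mul_sum, Finset.mul_sum,
      ← Finset.sum_add_distrib, ← Finset.sum_sub_distrib]
    exact Finset.sum_congr rfl fun j _ => by ring
  have key : rieszSym i x₁ x₂ x₃ =
      (∑ j : Fin n, (a i * b j - b i * a j) ^ 2) /
        (‖a‖ ^ 2 * ‖b‖ ^ 2 * ‖a + b‖ ^ 2) := by
    rw [rieszSym, show x₂ - x₁ = a from rfl, show x₃ - x₂ = b from rfl, e13, e21, e31, e32, hN]
    clear_value a b
    simp only [PiLp.neg_apply, PiLp.add_apply, norm_neg]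
    field_simp [hA.ne', hB.ne', hC.ne']
    rw [hCexp]
    ring
  refine ⟨key, ?_⟩
  rw [key]
  congr 1
  rw [Finset.filter_ne', Finset.sum_erase]
  ring_nf
end

section
/- Let x₁, x₂, x₃ ∈ ℝⁿ be pairwise distinct. If p_i(x₁,x₂,x₃) = 0 for at least n−1 values of the index i ∈ {1,…,n}, then x₁, x₂, x₃ lie on a common line. -/
/-- If `p_i(x₁,x₂,x₃) = 0` for at least `n − 1` values of the index `i`, then
the pairwise distinct points `x₁, x₂, x₃` lie on a common line. -/
theorem collinear_of_rieszSym_eq_zero (n : ℕ) (x₁ x₂ x₃ : EuclideanSpace ℝ (Fin n))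
    (h₁₂ : x₁ ≠ x₂) (h₁₃ : x₁ ≠ x₃) (h₂₃ : x₂ ≠ x₃)
    (S : Finset (Fin n)) (hS : n - 1 ≤ S.card)
    (hp : ∀ i ∈ S, rieszSym i x₁ x₂ x₃ = 0) :
    Collinear ℝ ({x₁, x₂, x₃} : Set (EuclideanSpace ℝ (Fin n))) := by
  classical
  set a := x₂ - x₁ with ha_def
  set b := x₃ - x₁ with hb_def
  have ha : a ≠ 0 := sub_ne_zero.mpr h₁₂.symm
  have hb : b ≠ 0 := sub_ne_zero.mpr h₁₃.symm
  have hc : b - a ≠ 0 := by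
    have h : b - a = x₃ - x₂ := by rw [ha_def, hb_def]; abel
    rw [h]; exact sub_ne_zero.mpr h₂₃.symm
  have hna : ‖a‖ ≠ 0 := norm_ne_zero_iff.mpr ha
  have hnb : ‖b‖ ≠ 0 := norm_ne_zero_iff.mpr hb
  have hnc : ‖b - a‖ ≠ 0 := norm_ne_zero_iff.mpr hc
  have main : ∃ t : ℝ, b = t • a := by
    by_contra hnot
    push_neg at hnot
    -- strict Cauchy–Schwarz
    have hcs : (inner ℝ a b : ℝ) ^ 2 < ‖a‖ ^ 2 * ‖b‖ ^ 2 := by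
      have h1 : (inner ℝ a b : ℝ) < ‖a‖ * ‖b‖ := by
        rw [inner_lt_norm_mul_iff_real]
        intro h
        have h' := congrArg (fun v : EuclideanSpace ℝ (Fin n) => ‖a‖⁻¹ • v) h
        simp only [smul_smul, inv_mul_cancel₀ hna, one_smul] at h'
        exact hnot (‖a‖⁻¹ * ‖b‖) h'.symm
      have h2 : (inner ℝ (-a) b : ℝ) < ‖-a‖ * ‖b‖ := by
        rw [inner_lt_norm_mul_iff_real]
        intro h
        rw [norm_neg] at h
        have h' := congrArg (fun v : EuclideanSpace ℝ (Fin n) => ‖a‖⁻¹ • v) h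
        simp only [smul_neg, smul_smul, inv_mul_cancel₀ hna, one_smul] at h'
        refine hnot (-(‖a‖⁻¹ * ‖b‖)) ?_
        rw [neg_smul]
        exact h'.symm
      rw [inner_neg_left, norm_neg] at h2
      nlinarith [mul_nonneg (norm_nonneg a) (norm_nonneg b)]
    have key : ∀ i ∈ S, a i = 0 ∧ b i = 0 := by
      intro i hi
      have h0 := hp i hi
      rw [rieszSym] at h0
      rw [← ha_def, ← hb_def,
        show x₃ - x₂ = b - a by rw [ha_def, hb_def]; abel,
        show x₁ - x₂ = -a by rw [ha_def]; abel,
        show x₁ - x₃ = -b by rw [hb_def]; abel,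
        show x₂ - x₃ = -(b - a) by rw [ha_def, hb_def]; abel] at h0
      simp only [PiLp.sub_apply, PiLp.neg_apply, norm_neg] at h0
      have hC2 : ‖b - a‖ ^ 2 = ‖b‖ ^ 2 - 2 * (inner ℝ a b : ℝ) + ‖a‖ ^ 2 := by
        rw [norm_sub_sq_real, real_inner_comm]
      have hApos : (0:ℝ) < ‖a‖ ^ 2 := pow_pos (norm_pos_iff.mpr ha) 2
      have hBpos : (0:ℝ) < ‖b‖ ^ 2 := pow_pos (norm_pos_iff.mpr hb) 2
      have hCpos : (0:ℝ) < ‖b - a‖ ^ 2 := pow_pos (norm_pos_iff.mpr hc) 2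
      field_simp at h0
      have h0' : (‖a‖ ^ 2 * ‖b‖ ^ 2 * ‖b - a‖ ^ 2) *
          (‖b‖ ^ 2 * (a i) ^ 2 - 2 * (inner ℝ a b : ℝ) * (a i * b i)
            + ‖a‖ ^ 2 * (b i) ^ 2) = 0 := by
        linear_combination (‖a‖ ^ 2 * ‖b‖ ^ 2 * ‖b - a‖ ^ 2) *
          (h0 - (a i * b i) * hC2)
      have hquad : ‖b‖ ^ 2 * (a i) ^ 2 - 2 * (inner ℝ a b : ℝ) * (a i * b i)
          + ‖a‖ ^ 2 * (b i) ^ 2 = 0 :=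
        (mul_eq_zero.mp h0').resolve_left
          (ne_of_gt (mul_pos (mul_pos hApos hBpos) hCpos))
      have e : (‖b‖ ^ 2 * (a i) - (inner ℝ a b : ℝ) * (b i)) ^ 2 +
          (‖a‖ ^ 2 * ‖b‖ ^ 2 - (inner ℝ a b : ℝ) ^ 2) * (b i) ^ 2 = 0 := by
        linear_combination ‖b‖ ^ 2 * hquad
      have hle : (‖a‖ ^ 2 * ‖b‖ ^ 2 - (inner ℝ a b : ℝ) ^ 2) * (b i) ^ 2 ≤ 0 := by
        nlinarith [sq_nonneg (‖b‖ ^ 2 * (a i) - (inner ℝ a b : ℝ) * (b i))]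
      have hprod : (‖a‖ ^ 2 * ‖b‖ ^ 2 - (inner ℝ a b : ℝ) ^ 2) * (b i) ^ 2 = 0 :=
        le_antisymm hle (mul_nonneg (le_of_lt (sub_pos.mpr hcs)) (sq_nonneg _))
      have hv : b i = 0 := by
        have := (mul_eq_zero.mp hprod).resolve_left (ne_of_gt (sub_pos.mpr hcs))
        exact pow_eq_zero_iff two_ne_zero |>.mp this
      have hu : a i = 0 := by
        have h2 : ‖b‖ ^ 2 * (a i) ^ 2 = 0 := by
          linear_combination hquad +
            (2 * (inner ℝ a b : ℝ) * (a i) - ‖a‖ ^ 2 * (b i)) * hv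
        have := (mul_eq_zero.mp h2).resolve_left (ne_of_gt hBpos)
        exact pow_eq_zero_iff two_ne_zero |>.mp this
      exact ⟨hu, hv⟩
    -- a and b are supported on Sᶜ, which has at most one element
    obtain ⟨j, hj⟩ : ∃ j, a j ≠ 0 := by
      by_contra h; push_neg at h; exact ha (by ext i; simpa using h i)
    obtain ⟨k, hk⟩ : ∃ k, b k ≠ 0 := by
      by_contra h; push_neg at h; exact hb (by ext i; simpa using h i)
    have hjS : j ∉ S := fun h => hj (key j h).1
    have hkS : k ∉ S := fun h => hk (key k h).2
    have hcard : (Sᶜ : Finset (Fin n)).card ≤ 1 := by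
      have := Finset.card_compl S
      rw [Fintype.card_fin] at this
      omega
    have hjk : j = k :=
      Finset.card_le_one.mp hcard j (Finset.mem_compl.mpr hjS) k (Finset.mem_compl.mpr hkS)
    refine hnot (b j / a j) ?_
    ext i
    rw [PiLp.smul_apply]
    by_cases hiS : i ∈ S
    · rw [(key i hiS).1, (key i hiS).2, smul_zero]
    · have : i = j :=
        Finset.card_le_one.mp hcard i (Finset.mem_compl.mpr hiS) j (Finset.mem_compl.mpr hjS)
      subst this
      rw [smul_eq_mul]
      field_simp
  obtain ⟨t, ht⟩ := main
  rw [collinear_iff_of_mem (Set.mem_insert x₁ _)]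
  refine ⟨a, ?_⟩
  intro p hp'
  simp only [Set.mem_insert_iff, Set.mem_singleton_iff] at hp'
  rcases hp' with rfl | rfl | rfl
  · exact ⟨0, by simp⟩
  · exact ⟨1, by rw [one_smul]; rw [ha_def]; simp⟩
  · exact ⟨t, by rw [← ht, hb_def]; simp⟩
end

section
/- Let x₁, x₂, x₃ ∈ ℝⁿ be pairwise distinct. If x₁, x₂, x₃ lie on a common line, then p_i(x₁,x₂,x₃) = 0 for every i with 1 ≤ i ≤ n. -/
/-- If the pairwise distinct points `x₁, x₂, x₃ ∈ ℝⁿ` lie on a common line, then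
`p_i(x₁,x₂,x₃) = 0` for every coordinate index `i`. -/
theorem rieszSym_eq_zero_of_collinear (n : ℕ) (x₁ x₂ x₃ : EuclideanSpace ℝ (Fin n))
    (h₁₂ : x₁ ≠ x₂) (h₁₃ : x₁ ≠ x₃) (h₂₃ : x₂ ≠ x₃)
    (hcol : Collinear ℝ ({x₁, x₂, x₃} : Set (EuclideanSpace ℝ (Fin n)))) :
    ∀ i : Fin n, rieszSym i x₁ x₂ x₃ = 0 := by
  intro i
  obtain ⟨p₀, v, hv⟩ := (collinear_iff_exists_forall_eq_smul_vadd _).mp hcol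
  obtain ⟨t₁, ht₁⟩ := hv x₁ (by simp)
  obtain ⟨t₂, ht₂⟩ := hv x₂ (by simp)
  obtain ⟨t₃, ht₃⟩ := hv x₃ (by simp)
  have e12 : x₂ - x₁ = (t₂ - t₁) • v := by
    rw [ht₁, ht₂, vadd_eq_add, vadd_eq_add, sub_smul]; abel
  have e13 : x₃ - x₁ = (t₃ - t₁) • v := by
    rw [ht₁, ht₃, vadd_eq_add, vadd_eq_add, sub_smul]; abel
  have e23 : x₃ - x₂ = (t₃ - t₂) • v := by
    rw [ht₂, ht₃, vadd_eq_add, vadd_eq_add, sub_smul]; abel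
  have e21 : x₁ - x₂ = -((t₂ - t₁) • v) := by rw [← e12]; abel
  have e31 : x₁ - x₃ = -((t₃ - t₁) • v) := by rw [← e13]; abel
  have e32 : x₂ - x₃ = -((t₃ - t₂) • v) := by rw [← e23]; abel
  have ha : t₂ - t₁ ≠ 0 := by
    intro h; apply h₁₂; rw [ht₁, ht₂, sub_eq_zero.mp h]
  have hb : t₃ - t₁ ≠ 0 := by
    intro h; apply h₁₃; rw [ht₁, ht₃, sub_eq_zero.mp h]
  have hc : t₃ - t₂ ≠ 0 := by
    intro h; apply h₂₃; rw [ht₂, ht₃, sub_eq_zero.mp h]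
  have hvne : v ≠ 0 := by
    intro h; apply h₁₂; rw [ht₁, ht₂, h, smul_zero, smul_zero]
  have hN : ‖v‖ ≠ 0 := norm_ne_zero_iff.mpr hvne
  have hcoord : ∀ s : ℝ, ((s • v : EuclideanSpace ℝ (Fin n)) i) = s * v i := by
    intro s; rfl
  have hnorm : ∀ s : ℝ, ‖(s • v : EuclideanSpace ℝ (Fin n))‖ ^ 2 = s ^ 2 * ‖v‖ ^ 2 := by
    intro s
    rw [norm_smul, mul_pow, Real.norm_eq_abs, sq_abs]
  have hrel : t₃ - t₂ = (t₃ - t₁) - (t₂ - t₁) := by ring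
  unfold rieszSym
  rw [e12, e13, e23, e21, e31, e32]
  simp only [norm_neg, PiLp.neg_apply, hcoord, hnorm]
  field_simp
  ring_nf
end

section
/- Let x₁, x₂, x₃ ∈ ℝ² be pairwise distinct. Then p₁(x₁,x₂,x₃) = p₂(x₁,x₂,x₃) = (1/4)·c(x₁,x₂,x₃)², where c(x₁,x₂,x₃) = 4A / (|x₁−x₂|·|x₁−x₃|·|x₂−x₃|) is the Menger curvature and A = (1/2)·|det(x₂−x₁, x₃−x₁)| is the area of the triangle with vertices x₁, x₂, x₃. In particular p₁ and p₂ are non-negative and vanish if and only if x₁, x₂, x₃ are collinear. -/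
/-- The area of the triangle with vertices `x₁, x₂, x₃ ∈ ℝ²`:
`A = (1/2)|det(x₂ − x₁, x₃ − x₁)|`. -/
noncomputable def triangleArea (x₁ x₂ x₃ : EuclideanSpace ℝ (Fin 2)) : ℝ :=
    (1 / 2) * |(x₂ - x₁) 0 * (x₃ - x₁) 1 - (x₂ - x₁) 1 * (x₃ - x₁) 0|

/-- The Menger curvature `c(x₁,x₂,x₃) = 4A / (|x₁−x₂||x₁−x₃||x₂−x₃|)`. -/
noncomputable def menger (x₁ x₂ x₃ : EuclideanSpace ℝ (Fin 2)) : ℝ :=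
    4 * triangleArea x₁ x₂ x₃ / (‖x₁ - x₂‖ * ‖x₁ - x₃‖ * ‖x₂ - x₃‖)

lemma euclid_norm_sq_two (y : EuclideanSpace ℝ (Fin 2)) : ‖y‖ ^ 2 = y 0 ^ 2 + y 1 ^ 2 := by
  rw [EuclideanSpace.norm_eq, Real.sq_sqrt (by positivity)]
  simp [Fin.sum_univ_two]

lemma euclid_sumsq_ne {x y : EuclideanSpace ℝ (Fin 2)} (h : x ≠ y) :
    (y 0 - x 0) ^ 2 + (y 1 - x 1) ^ 2 ≠ 0 := by
  have h1 : ‖y - x‖ ≠ 0 := by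
    simpa [sub_eq_zero] using (fun e => h e.symm)
  have h2 := euclid_norm_sq_two (y - x)
  simp only [PiLp.sub_apply] at h2
  intro hc
  exact pow_ne_zero 2 h1 (h2.trans hc)

lemma real_key0 (a0 a1 b0 b1 : ℝ) (hA : a0 ^ 2 + a1 ^ 2 ≠ 0) (hB : b0 ^ 2 + b1 ^ 2 ≠ 0)
    (hC : (b0 - a0) ^ 2 + (b1 - a1) ^ 2 ≠ 0) :
    a0 / (a0 ^ 2 + a1 ^ 2) * (b0 / (b0 ^ 2 + b1 ^ 2)) +
    -a0 / (a0 ^ 2 + a1 ^ 2) * ((b0 - a0) / ((b0 - a0) ^ 2 + (b1 - a1) ^ 2)) +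
    -b0 / (b0 ^ 2 + b1 ^ 2) * (-(b0 - a0) / ((b0 - a0) ^ 2 + (b1 - a1) ^ 2)) =
    (a0 * b1 - a1 * b0) ^ 2 /
      ((a0 ^ 2 + a1 ^ 2) * (b0 ^ 2 + b1 ^ 2) * ((b0 - a0) ^ 2 + (b1 - a1) ^ 2)) := by
  field_simp
  ring

lemma real_key1 (a0 a1 b0 b1 : ℝ) (hA : a0 ^ 2 + a1 ^ 2 ≠ 0) (hB : b0 ^ 2 + b1 ^ 2 ≠ 0)
    (hC : (b0 - a0) ^ 2 + (b1 - a1) ^ 2 ≠ 0) :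
    a1 / (a0 ^ 2 + a1 ^ 2) * (b1 / (b0 ^ 2 + b1 ^ 2)) +
    -a1 / (a0 ^ 2 + a1 ^ 2) * ((b1 - a1) / ((b0 - a0) ^ 2 + (b1 - a1) ^ 2)) +
    -b1 / (b0 ^ 2 + b1 ^ 2) * (-(b1 - a1) / ((b0 - a0) ^ 2 + (b1 - a1) ^ 2)) =
    (a0 * b1 - a1 * b0) ^ 2 /
      ((a0 ^ 2 + a1 ^ 2) * (b0 ^ 2 + b1 ^ 2) * ((b0 - a0) ^ 2 + (b1 - a1) ^ 2)) := by
  field_simp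
  ring

/-- Key formula: both coordinates of `rieszSym` equal `det² / (product of squared norms)`. -/
lemma rieszSym_formula (i : Fin 2) (x₁ x₂ x₃ : EuclideanSpace ℝ (Fin 2))
    (h₁₂ : x₁ ≠ x₂) (h₁₃ : x₁ ≠ x₃) (h₂₃ : x₂ ≠ x₃) :
    rieszSym i x₁ x₂ x₃ =
      ((x₂ - x₁) 0 * (x₃ - x₁) 1 - (x₂ - x₁) 1 * (x₃ - x₁) 0) ^ 2 /
        (‖x₂ - x₁‖ ^ 2 * ‖x₃ - x₁‖ ^ 2 * ‖x₃ - x₂‖ ^ 2) := by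
  have e12 := euclid_sumsq_ne h₁₂
  have e13 := euclid_sumsq_ne h₁₃
  have hkey : (x₃ 0 - x₁ 0 - (x₂ 0 - x₁ 0)) ^ 2 + (x₃ 1 - x₁ 1 - (x₂ 1 - x₁ 1)) ^ 2 =
      (x₃ 0 - x₂ 0) ^ 2 + (x₃ 1 - x₂ 1) ^ 2 := by ring
  have hC : (x₃ 0 - x₁ 0 - (x₂ 0 - x₁ 0)) ^ 2 + (x₃ 1 - x₁ 1 - (x₂ 1 - x₁ 1)) ^ 2 ≠ 0 :=
    fun hc => euclid_sumsq_ne h₂₃ (by rw [← hkey]; exact hc)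
  unfold rieszSym
  rw [show x₁ - x₂ = -(x₂ - x₁) from (neg_sub _ _).symm,
      show x₁ - x₃ = -(x₃ - x₁) from (neg_sub _ _).symm,
      show x₂ - x₃ = -(x₃ - x₂) from (neg_sub _ _).symm,
      show x₃ - x₂ = (x₃ - x₁) - (x₂ - x₁) from (sub_sub_sub_cancel_right _ _ _).symm]
  simp only [norm_neg, euclid_norm_sq_two, PiLp.sub_apply, PiLp.neg_apply]
  fin_cases i
  · exact real_key0 (x₂ 0 - x₁ 0) (x₂ 1 - x₁ 1) (x₃ 0 - x₁ 0) (x₃ 1 - x₁ 1) e12 e13 hC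
  · exact real_key1 (x₂ 0 - x₁ 0) (x₂ 1 - x₁ 1) (x₃ 0 - x₁ 0) (x₃ 1 - x₁ 1) e12 e13 hC

/-- In the plane, `p₁ = p₂ = (1/4) c(x₁,x₂,x₃)²`; in particular both are non-negative and
vanish exactly when `x₁, x₂, x₃` are collinear. -/
theorem rieszSym_eq_quarter_menger_sq (x₁ x₂ x₃ : EuclideanSpace ℝ (Fin 2))
    (h₁₂ : x₁ ≠ x₂) (h₁₃ : x₁ ≠ x₃) (h₂₃ : x₂ ≠ x₃) :
    rieszSym 0 x₁ x₂ x₃ = rieszSym 1 x₁ x₂ x₃ ∧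
    rieszSym 0 x₁ x₂ x₃ = (1 / 4) * menger x₁ x₂ x₃ ^ 2 ∧
    0 ≤ rieszSym 0 x₁ x₂ x₃ ∧
    (rieszSym 0 x₁ x₂ x₃ = 0 ↔
      Collinear ℝ ({x₁, x₂, x₃} : Set (EuclideanSpace ℝ (Fin 2)))) := by
  have f0 := rieszSym_formula 0 x₁ x₂ x₃ h₁₂ h₁₃ h₂₃
  have f1 := rieszSym_formula 1 x₁ x₂ x₃ h₁₂ h₁₃ h₂₃
  have n12 : ‖x₂ - x₁‖ ≠ 0 := by simpa [sub_eq_zero] using fun e => h₁₂ e.symm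
  have n13 : ‖x₃ - x₁‖ ≠ 0 := by simpa [sub_eq_zero] using fun e => h₁₃ e.symm
  have n23 : ‖x₃ - x₂‖ ≠ 0 := by simpa [sub_eq_zero] using fun e => h₂₃ e.symm
  set D : ℝ := (x₂ - x₁) 0 * (x₃ - x₁) 1 - (x₂ - x₁) 1 * (x₃ - x₁) 0 with hD
  have hdenpos : 0 < ‖x₂ - x₁‖ ^ 2 * ‖x₃ - x₁‖ ^ 2 * ‖x₃ - x₂‖ ^ 2 := by positivity
  refine ⟨f0.trans f1.symm, ?_, ?_, ?_⟩
  · rw [f0, menger, triangleArea, ← hD]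
    rw [norm_sub_rev x₁ x₂, norm_sub_rev x₁ x₃, norm_sub_rev x₂ x₃]
    rw [div_pow, mul_pow, mul_pow, mul_pow, mul_pow, sq_abs]
    field_simp
    ring
  · rw [f0]; positivity
  · rw [f0]
    constructor
    · intro h
      have hDz : D = 0 := by
        have := (div_eq_zero_iff.mp h).resolve_right (ne_of_gt hdenpos)
        exact pow_eq_zero_iff (by norm_num) |>.mp this
      rw [hD] at hDz
      simp only [PiLp.sub_apply] at hDz
      have hune : ¬(x₂ 0 - x₁ 0 = 0 ∧ x₂ 1 - x₁ 1 = 0) := by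
        rintro ⟨h0, h1⟩
        apply h₁₂
        ext i
        fin_cases i
        · exact show x₁ 0 = x₂ 0 by linarith
        · exact show x₁ 1 = x₂ 1 by linarith
      obtain ⟨c, hc0, hc1⟩ : ∃ c : ℝ, x₃ 0 - x₁ 0 = c * (x₂ 0 - x₁ 0) ∧
          x₃ 1 - x₁ 1 = c * (x₂ 1 - x₁ 1) := by
        by_cases ha : x₂ 0 - x₁ 0 = 0
        · have hb : x₂ 1 - x₁ 1 ≠ 0 := fun h' => hune ⟨ha, h'⟩
          have hb0 : x₃ 0 - x₁ 0 = 0 := by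
            have hm : (x₂ 1 - x₁ 1) * (x₃ 0 - x₁ 0) = 0 := by
              rw [ha] at hDz; linarith
            exact (mul_eq_zero.mp hm).resolve_left hb
          exact ⟨(x₃ 1 - x₁ 1) / (x₂ 1 - x₁ 1), by rw [ha, hb0]; ring,
            (div_mul_cancel₀ _ hb).symm⟩
        · refine ⟨(x₃ 0 - x₁ 0) / (x₂ 0 - x₁ 0), (div_mul_cancel₀ _ ha).symm, ?_⟩
          field_simp
          nlinarith [hDz]
      rw [collinear_iff_of_mem (Set.mem_insert x₁ _)]
      refine ⟨x₂ - x₁, fun p hp => ?_⟩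
      rcases hp with rfl | hp
      · exact ⟨0, by simp⟩
      rcases hp with rfl | hp
      · refine ⟨1, ?_⟩
        simp only [one_smul, vadd_eq_add]
        abel
      rw [Set.mem_singleton_iff] at hp
      rw [hp]
      refine ⟨c, ?_⟩
      simp only [vadd_eq_add]
      ext i
      fin_cases i
      · exact show x₃ 0 = c * (x₂ 0 - x₁ 0) + x₁ 0 by linarith
      · exact show x₃ 1 = c * (x₂ 1 - x₁ 1) + x₁ 1 by linarith
    · intro hcol
      rw [collinear_iff_of_mem (Set.mem_insert x₁ _)] at hcol
      obtain ⟨v, hv⟩ := hcol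
      obtain ⟨r₂, hr₂⟩ := hv x₂ (by simp)
      obtain ⟨r₃, hr₃⟩ := hv x₃ (by simp)
      have h2 : x₂ - x₁ = r₂ • v := by rw [hr₂, vadd_eq_add, add_sub_cancel_right]
      have h3 : x₃ - x₁ = r₃ • v := by rw [hr₃, vadd_eq_add, add_sub_cancel_right]
      have hDz : D = 0 := by
        rw [hD, h2, h3]
        simp only [PiLp.smul_apply, smul_eq_mul]
        ring
      rw [hDz]
      simp
end

section
/- For every n ≥ 2, every coordinate index i with 1 ≤ i ≤ n, and every triple of pairwise distinct points x₁, x₂, x₃ ∈ ℝⁿ, one has p_i(x₁,x₂,x₃) ≤ Σ_{j ≠ i} p_j(x₁,x₂,x₃), where the sum runs over j ∈ {1,…,n} with j ≠ i. -/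
open scoped RealInnerProductSpace

lemma aux_riesz (A B t u v : ℝ) (hA : 0 < A) (hB : 0 < B) (hC : 0 < A + B - 2*t)
    (key : (t - u*v)^2 ≤ (A - u^2)*(B - v^2)) :
    2*(u*v/(A*B) + (u^2 - u*v)/(A*(A+B-2*t)) + (v^2 - u*v)/(B*(A+B-2*t))) ≤
      t/(A*B) + (A-t)/(A*(A+B-2*t)) + (B-t)/(B*(A+B-2*t)) := by
  rw [← sub_nonneg]
  have h : t/(A*B) + (A-t)/(A*(A+B-2*t)) + (B-t)/(B*(A+B-2*t))
      - 2*(u*v/(A*B) + (u^2 - u*v)/(A*(A+B-2*t)) + (v^2 - u*v)/(B*(A+B-2*t)))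
      = 2*((A-u^2)*(B-v^2)-(t-u*v)^2)/(A*B*(A+B-2*t)) := by
    rw [div_add_div _ _ (by positivity) (by positivity), div_add_div _ _ (by positivity) (by positivity),
      div_add_div _ _ (by positivity) (by positivity), div_add_div _ _ (by positivity) (by positivity),
      mul_div_assoc', div_sub_div _ _ (by positivity) (by positivity), div_eq_div_iff (by positivity) (by positivity)]
    ring
  rw [h]
  apply div_nonneg
  · nlinarith [key]
  · positivity

/-- For every `n ≥ 2`, every coordinate index `i` and pairwise distinct points
`x₁, x₂, x₃ ∈ ℝⁿ`, one has `p_i(x₁,x₂,x₃) ≤ Σ_{j ≠ i} p_j(x₁,x₂,x₃)`. -/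
theorem rieszSym_le_sum_rieszSym (n : ℕ) (hn : 2 ≤ n) (i : Fin n)
    (x₁ x₂ x₃ : EuclideanSpace ℝ (Fin n))
    (h₁₂ : x₁ ≠ x₂) (h₁₃ : x₁ ≠ x₃) (h₂₃ : x₂ ≠ x₃) :
    rieszSym i x₁ x₂ x₃ ≤
      ∑ j ∈ Finset.univ.filter (fun j => j ≠ i), rieszSym j x₁ x₂ x₃ := by
  classical
  have hne12 : x₂ - x₁ ≠ 0 := sub_ne_zero.mpr h₁₂.symm
  have hne13 : x₃ - x₁ ≠ 0 := sub_ne_zero.mpr h₁₃.symm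
  have hne23 : x₃ - x₂ ≠ 0 := sub_ne_zero.mpr h₂₃.symm
  set A := ‖x₂ - x₁‖ ^ 2 with hA_def
  set B := ‖x₃ - x₁‖ ^ 2 with hB_def
  set C := ‖x₃ - x₂‖ ^ 2 with hC_def
  set t : ℝ := ⟪x₂ - x₁, x₃ - x₁⟫ with ht_def
  have hA : 0 < A := by rw [hA_def]; exact pow_pos (norm_pos_iff.mpr hne12) 2
  have hB : 0 < B := by rw [hB_def]; exact pow_pos (norm_pos_iff.mpr hne13) 2
  have hC : 0 < C := by rw [hC_def]; exact pow_pos (norm_pos_iff.mpr hne23) 2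
  have e2 : x₃ - x₂ = (x₃ - x₁) - (x₂ - x₁) := by abel
  have hCC : C = A + B - 2*t := by
    rw [hC_def, hA_def, hB_def, ht_def, e2, norm_sub_sq_real, real_inner_comm]
    ring
  -- sums of coordinates
  have htsum : ∑ j, (x₂ - x₁) j * (x₃ - x₁) j = t := by
    rw [ht_def]
    simp [PiLp.inner_apply, RCLike.inner_apply, conj_trivial]
    exact Finset.sum_congr rfl (fun j _ => mul_comm _ _)
  have hAsum : ∑ j, ((x₂ - x₁) j)^2 = A := by
    rw [hA_def, EuclideanSpace.norm_eq, Real.sq_sqrt (by positivity)]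
    simp [sq_abs]
  have hBsum : ∑ j, ((x₃ - x₁) j)^2 = B := by
    rw [hB_def, EuclideanSpace.norm_eq, Real.sq_sqrt (by positivity)]
    simp [sq_abs]
  -- pointwise formula for rieszSym
  have hP : ∀ j, rieszSym j x₁ x₂ x₃ =
      ((x₂ - x₁) j * (x₃ - x₁) j)/(A*B)
        + (((x₂ - x₁) j)^2 - (x₂ - x₁) j * (x₃ - x₁) j)/(A*C)
        + (((x₃ - x₁) j)^2 - (x₂ - x₁) j * (x₃ - x₁) j)/(B*C) := by
    intro j
    have e1 : x₁ - x₂ = -(x₂ - x₁) := by abel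
    have e3 : x₁ - x₃ = -(x₃ - x₁) := by abel
    have e4 : x₂ - x₃ = -(x₃ - x₂) := by abel
    have enorm : ‖x₂ - x₃‖ = ‖x₃ - x₂‖ := norm_sub_rev _ _
    simp only [rieszSym, e1, e3, e4, norm_neg, PiLp.neg_apply, PiLp.sub_apply,
      ← hA_def, ← hB_def, ← hC_def]
    field_simp
    ring
  -- total sum
  have hT : ∑ j, rieszSym j x₁ x₂ x₃ = t/(A*B) + (A - t)/(A*C) + (B - t)/(B*C) := by
    simp only [hP, Finset.sum_add_distrib, ← Finset.sum_div, Finset.sum_sub_distrib,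
      htsum, hAsum, hBsum]
  -- Cauchy-Schwarz on the remaining coordinates
  have h1 : ∑ j ∈ Finset.univ.erase i, (x₂ - x₁) j * (x₃ - x₁) j
      = t - (x₂ - x₁) i * (x₃ - x₁) i := by
    rw [Finset.sum_erase_eq_sub (Finset.mem_univ i), htsum]
  have h2 : ∑ j ∈ Finset.univ.erase i, ((x₂ - x₁) j)^2 = A - ((x₂ - x₁) i)^2 := by
    rw [Finset.sum_erase_eq_sub (Finset.mem_univ i), hAsum]
  have h3 : ∑ j ∈ Finset.univ.erase i, ((x₃ - x₁) j)^2 = B - ((x₃ - x₁) i)^2 := by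
    rw [Finset.sum_erase_eq_sub (Finset.mem_univ i), hBsum]
  have key : (t - (x₂ - x₁) i * (x₃ - x₁) i)^2
      ≤ (A - ((x₂ - x₁) i)^2) * (B - ((x₃ - x₁) i)^2) := by
    have := Finset.sum_mul_sq_le_sq_mul_sq (Finset.univ.erase i)
      (fun j => (x₂ - x₁) j) (fun j => (x₃ - x₁) j)
    rw [h1, h2, h3] at this
    exact this
  rw [Finset.filter_ne', Finset.sum_erase_eq_sub (Finset.mem_univ i), hT, hP i]
  rw [hCC] at hC ⊢
  have := aux_riesz A B t ((x₂ - x₁) i) ((x₃ - x₁) i) hA hB hC key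
  linarith
end

section
/- There exists a constant C > 0 depending only on n with the following property: for every compactly supported finite positive Borel measure μ on ℝⁿ satisfying μ(B(x,r)) ≤ r for all x ∈ ℝⁿ and r > 0, for every index i with 1 ≤ i ≤ n and every ε > 0, one has |∫ |R^i_ε(μ)(x)|² dμ(x) − (1/3)·p_{i,ε}(μ)| ≤ C·μ(ℝⁿ). -/
open MeasureTheory
open scoped ENNReal

/-- The truncated `i`-th scalar Riesz transform of the measure `μ`:
`R^i_ε(μ)(x) = ∫_{|y−x|>ε} (x_i−y_i)/|x−y|² dμ(y)`. -/
noncomputable def truncRiesz {n : ℕ} (i : Fin n) (ε : ℝ)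
    (μ : Measure (EuclideanSpace ℝ (Fin n))) (x : EuclideanSpace ℝ (Fin n)) : ℝ :=
    ∫ y in {y | ε < ‖x - y‖}, (x - y) i / ‖x - y‖ ^ 2 ∂μ

/-- The truncated triple symmetrization integral
`p_{i,ε}(μ) = ∭_{S_ε} p_i(x,y,z) dμ(x)dμ(y)dμ(z)`. -/
noncomputable def truncSym {n : ℕ} (i : Fin n) (ε : ℝ)
    (μ : Measure (EuclideanSpace ℝ (Fin n))) : ℝ :=
    ∫ x, ∫ y, ∫ z,
      (if ε < ‖x - y‖ ∧ ε < ‖x - z‖ ∧ ε < ‖y - z‖ then rieszSym i x y z else 0)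
      ∂μ ∂μ ∂μ

/-! ### Generic bounded-measurable integrability helpers -/

section BddHelpers

variable {α : Type*} [MeasurableSpace α] {μ : Measure α} [IsFiniteMeasure μ]

lemma integrable_of_bdd {f : α → ℝ} (hf : AEStronglyMeasurable f μ) {C : ℝ}
    (h : ∀ a, |f a| ≤ C) : Integrable f μ :=
  ⟨hf, HasFiniteIntegral.of_bounded (C := C)
    (Filter.Eventually.of_forall fun a => by simpa [Real.norm_eq_abs] using h a)⟩

lemma abs_integral_le_const {f : α → ℝ} (hf : AEStronglyMeasurable f μ) {C : ℝ}
    (h : ∀ a, |f a| ≤ C) : |∫ a, f a ∂μ| ≤ C * (μ Set.univ).toReal := by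
  have hi : Integrable f μ := integrable_of_bdd hf h
  calc |∫ a, f a ∂μ| ≤ ∫ a, |f a| ∂μ := by
        simpa [Real.norm_eq_abs] using norm_integral_le_integral_norm f (μ := μ)
    _ ≤ ∫ _, C ∂μ := integral_mono hi.abs (integrable_const C) h
    _ = C * (μ Set.univ).toReal := by rw [integral_const, smul_eq_mul, measureReal_def]; ring

end BddHelpers

/-! ### Triple iterated integral machinery -/

section Iter3

variable {α : Type*} [MeasurableSpace α]

/-- Triple iterated integral. -/
noncomputable def Tm (μ : Measure α) (F : α → α → α → ℝ) : ℝ :=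
  ∫ x, ∫ y, ∫ z, F x y z ∂μ ∂μ ∂μ

variable {μ : Measure α} [IsFiniteMeasure μ] {F G : α → α → α → ℝ} {C D : ℝ}

lemma sec_meas2 (hmF : Measurable fun p : α × α × α => F p.1 p.2.1 p.2.2) (x : α) :
    Measurable fun q : α × α => F x q.1 q.2 :=
  hmF.comp measurable_prodMk_left

lemma sec_meas1 (hmF : Measurable fun p : α × α × α => F p.1 p.2.1 p.2.2) (x y : α) :
    Measurable fun z => F x y z :=
  (sec_meas2 hmF x).comp measurable_prodMk_left

lemma int_inner (hmF : Measurable fun p : α × α × α => F p.1 p.2.1 p.2.2)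
    (hbF : ∀ x y z, |F x y z| ≤ C) (x y : α) : Integrable (fun z => F x y z) μ :=
  integrable_of_bdd (sec_meas1 hmF x y).aestronglyMeasurable (hbF x y)

lemma sm_pair (hmF : Measurable fun p : α × α × α => F p.1 p.2.1 p.2.2) :
    StronglyMeasurable fun p : α × α => ∫ z, F p.1 p.2 z ∂μ := by
  have hm' : Measurable fun q : (α × α) × α => F q.1.1 q.1.2 q.2 :=
    hmF.comp ((measurable_fst.fst).prodMk ((measurable_fst.snd).prodMk measurable_snd))
  exact hm'.stronglyMeasurable.integral_prod_right'

lemma abs_inner_le (hmF : Measurable fun p : α × α × α => F p.1 p.2.1 p.2.2)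
    (hbF : ∀ x y z, |F x y z| ≤ C) (x y : α) :
    |∫ z, F x y z ∂μ| ≤ C * (μ Set.univ).toReal :=
  abs_integral_le_const (sec_meas1 hmF x y).aestronglyMeasurable (hbF x y)

lemma int_mid (hmF : Measurable fun p : α × α × α => F p.1 p.2.1 p.2.2)
    (hbF : ∀ x y z, |F x y z| ≤ C) (x : α) :
    Integrable (fun y => ∫ z, F x y z ∂μ) μ :=
  integrable_of_bdd ((sm_pair hmF).comp_measurable
    measurable_prodMk_left).aestronglyMeasurable (abs_inner_le hmF hbF x)

lemma sm_outer (hmF : Measurable fun p : α × α × α => F p.1 p.2.1 p.2.2) :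
    StronglyMeasurable fun x => ∫ y, ∫ z, F x y z ∂μ ∂μ :=
  (sm_pair hmF).integral_prod_right'

lemma abs_mid_le (hmF : Measurable fun p : α × α × α => F p.1 p.2.1 p.2.2)
    (hbF : ∀ x y z, |F x y z| ≤ C) (x : α) :
    |∫ y, ∫ z, F x y z ∂μ ∂μ| ≤ C * (μ Set.univ).toReal * (μ Set.univ).toReal :=
  abs_integral_le_const ((sm_pair hmF).comp_measurable
    measurable_prodMk_left).aestronglyMeasurable (abs_inner_le hmF hbF x)

lemma int_outer (hmF : Measurable fun p : α × α × α => F p.1 p.2.1 p.2.2)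
    (hbF : ∀ x y z, |F x y z| ≤ C) :
    Integrable (fun x => ∫ y, ∫ z, F x y z ∂μ ∂μ) μ :=
  integrable_of_bdd (sm_outer hmF).aestronglyMeasurable (abs_mid_le hmF hbF)

lemma Tm_add (hmF : Measurable fun p : α × α × α => F p.1 p.2.1 p.2.2)
    (hbF : ∀ x y z, |F x y z| ≤ C)
    (hmG : Measurable fun p : α × α × α => G p.1 p.2.1 p.2.2)
    (hbG : ∀ x y z, |G x y z| ≤ D) :
    Tm μ (fun x y z => F x y z + G x y z) = Tm μ F + Tm μ G := by
  unfold Tm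
  rw [← integral_add (int_outer hmF hbF) (int_outer hmG hbG)]
  refine integral_congr_ae (Filter.Eventually.of_forall fun x => ?_)
  dsimp only
  rw [← integral_add (int_mid hmF hbF x) (int_mid hmG hbG x)]
  refine integral_congr_ae (Filter.Eventually.of_forall fun y => ?_)
  dsimp only
  exact integral_add (int_inner hmF hbF x y) (int_inner hmG hbG x y)

omit [IsFiniteMeasure μ] in
lemma Tm_mul_left (c : ℝ) : Tm μ (fun x y z => c * F x y z) = c * Tm μ F := by
  unfold Tm
  simp only [integral_const_mul]

lemma Tm_swap12 (hmF : Measurable fun p : α × α × α => F p.1 p.2.1 p.2.2)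
    (hbF : ∀ x y z, |F x y z| ≤ C) :
    Tm μ F = Tm μ (fun x y z => F y x z) := by
  unfold Tm
  exact integral_integral_swap ⟨(sm_pair hmF).aestronglyMeasurable,
    HasFiniteIntegral.of_bounded (C := C * (μ Set.univ).toReal)
      (Filter.Eventually.of_forall fun p => by
        simpa [Real.norm_eq_abs, Function.uncurry] using abs_inner_le hmF hbF p.1 p.2)⟩

lemma Tm_swap23 (hmF : Measurable fun p : α × α × α => F p.1 p.2.1 p.2.2)
    (hbF : ∀ x y z, |F x y z| ≤ C) :
    Tm μ F = Tm μ (fun x y z => F x z y) := by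
  unfold Tm
  refine integral_congr_ae (Filter.Eventually.of_forall fun x => ?_)
  exact integral_integral_swap ⟨(sec_meas2 hmF x).aestronglyMeasurable,
    HasFiniteIntegral.of_bounded (C := C)
      (Filter.Eventually.of_forall fun p => by
        simpa [Real.norm_eq_abs, Function.uncurry] using hbF x p.1 p.2)⟩

lemma Tm_abs_le (hmF : Measurable fun p : α × α × α => F p.1 p.2.1 p.2.2)
    (hbF : ∀ x y z, |F x y z| ≤ C)
    (hmG : Measurable fun p : α × α × α => G p.1 p.2.1 p.2.2)
    (hbG : ∀ x y z, |G x y z| ≤ D)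
    (hle : ∀ x y z, |F x y z| ≤ G x y z) : |Tm μ F| ≤ Tm μ G := by
  unfold Tm
  calc |∫ x, ∫ y, ∫ z, F x y z ∂μ ∂μ ∂μ| ≤ ∫ x, |∫ y, ∫ z, F x y z ∂μ ∂μ| ∂μ := by
        simpa [Real.norm_eq_abs] using
          norm_integral_le_integral_norm (fun x => ∫ y, ∫ z, F x y z ∂μ ∂μ) (μ := μ)
    _ ≤ ∫ x, ∫ y, ∫ z, G x y z ∂μ ∂μ ∂μ := by
        refine integral_mono (int_outer hmF hbF).abs (int_outer hmG hbG) fun x => ?_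
        calc |∫ y, ∫ z, F x y z ∂μ ∂μ| ≤ ∫ y, |∫ z, F x y z ∂μ| ∂μ := by
              simpa [Real.norm_eq_abs] using
                norm_integral_le_integral_norm (fun y => ∫ z, F x y z ∂μ) (μ := μ)
          _ ≤ ∫ y, ∫ z, G x y z ∂μ ∂μ := by
              refine integral_mono (int_mid hmF hbF x).abs (int_mid hmG hbG x) fun y => ?_
              calc |∫ z, F x y z ∂μ| ≤ ∫ z, |F x y z| ∂μ := by
                    simpa [Real.norm_eq_abs] using
                      norm_integral_le_integral_norm (fun z => F x y z) (μ := μ)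
                _ ≤ ∫ z, G x y z ∂μ :=
                    integral_mono (int_inner hmF hbF x y).abs (int_inner hmG hbG x y)
                      (hle x y)

end Iter3

/-! ### Euclidean kernels -/

section Kernels

variable {n : ℕ}

/-- The scalar Riesz kernel `k_i(x-y)`. -/
noncomputable def kval (i : Fin n) (x y : EuclideanSpace ℝ (Fin n)) : ℝ :=
  (x - y) i / ‖x - y‖ ^ 2

/-- The truncated scalar Riesz kernel. -/
noncomputable def tk (i : Fin n) (ε : ℝ) (x y : EuclideanSpace ℝ (Fin n)) : ℝ :=
  if ε < ‖x - y‖ then kval i x y else 0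

/-- The truncated quadratic majorant kernel. -/
noncomputable def gk (ε : ℝ) (x y : EuclideanSpace ℝ (Fin n)) : ℝ :=
  if ε < ‖x - y‖ then 1 / ‖x - y‖ ^ 2 else 0

/-- The "good" symmetrized part. -/
noncomputable def Gf (i : Fin n) (ε : ℝ) (x y z : EuclideanSpace ℝ (Fin n)) : ℝ :=
  if ε < ‖x - y‖ ∧ ε < ‖x - z‖ ∧ ε < ‖y - z‖ then kval i x y * kval i x z else 0

/-- The "bad" error part. -/
noncomputable def Bf (i : Fin n) (ε : ℝ) (x y z : EuclideanSpace ℝ (Fin n)) : ℝ :=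
  if ε < ‖x - y‖ ∧ ε < ‖x - z‖ ∧ ¬ ε < ‖y - z‖ then kval i x y * kval i x z else 0

lemma coord_abs_le_norm (i : Fin n) (u : EuclideanSpace ℝ (Fin n)) : |u i| ≤ ‖u‖ := by
  rw [EuclideanSpace.norm_eq u]
  have h1 : |u i| = Real.sqrt (|u i| ^ 2) := by rw [Real.sqrt_sq_eq_abs, abs_abs]
  rw [h1]
  apply Real.sqrt_le_sqrt
  have := Finset.single_le_sum (f := fun j => ‖u j‖ ^ 2) (fun j _ => by positivity)
    (Finset.mem_univ i)
  simpa [Real.norm_eq_abs] using this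

lemma abs_kval_le_inv_norm (i : Fin n) (x y : EuclideanSpace ℝ (Fin n)) :
    |kval i x y| ≤ 1 / ‖x - y‖ := by
  unfold kval
  rcases eq_or_ne (‖x - y‖) 0 with h | h
  · simp [h]
  · have hpos : 0 < ‖x - y‖ := lt_of_le_of_ne (norm_nonneg _) (Ne.symm h)
    rw [abs_div, abs_of_nonneg (by positivity : (0:ℝ) ≤ ‖x - y‖ ^ 2),
      div_le_div_iff₀ (by positivity) hpos]
    calc |(x - y) i| * ‖x - y‖ ≤ ‖x - y‖ * ‖x - y‖ := by
          gcongr; exact coord_abs_le_norm i _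
      _ = 1 * ‖x - y‖ ^ 2 := by ring

lemma abs_kval_le_of_lt {i : Fin n} {ε : ℝ} (hε : 0 < ε) {x y : EuclideanSpace ℝ (Fin n)}
    (h : ε < ‖x - y‖) : |kval i x y| ≤ 1 / ε :=
  (abs_kval_le_inv_norm i x y).trans (one_div_le_one_div_of_le hε h.le)

lemma kval_antisymm (i : Fin n) (x y : EuclideanSpace ℝ (Fin n)) :
    kval i x y = - kval i y x := by
  unfold kval
  rw [show x - y = -(y - x) by abel]
  simp only [PiLp.neg_apply, norm_neg, neg_div]

lemma gk_nonneg (ε : ℝ) (x y : EuclideanSpace ℝ (Fin n)) : 0 ≤ gk ε x y := by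
  unfold gk; split <;> positivity

lemma gk_le {ε : ℝ} (hε : 0 < ε) (x y : EuclideanSpace ℝ (Fin n)) : gk ε x y ≤ 1 / ε ^ 2 := by
  unfold gk; split
  · rename_i h
    exact one_div_le_one_div_of_le (by positivity) (by nlinarith)
  · positivity

lemma abs_Gf_le {i : Fin n} {ε : ℝ} (hε : 0 < ε) (x y z : EuclideanSpace ℝ (Fin n)) :
    |Gf i ε x y z| ≤ 1 / ε ^ 2 := by
  unfold Gf
  split
  · rename_i h
    rw [abs_mul]
    calc |kval i x y| * |kval i x z| ≤ (1/ε) * (1/ε) := by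
          apply mul_le_mul (abs_kval_le_of_lt hε h.1) (abs_kval_le_of_lt hε h.2.1)
            (abs_nonneg _) (by positivity)
      _ = 1 / ε ^ 2 := by ring
  · simp; positivity

lemma abs_Bf_le {i : Fin n} {ε : ℝ} (hε : 0 < ε) (x y z : EuclideanSpace ℝ (Fin n)) :
    |Bf i ε x y z| ≤ 1 / ε ^ 2 := by
  unfold Bf
  split
  · rename_i h
    rw [abs_mul]
    calc |kval i x y| * |kval i x z| ≤ (1/ε) * (1/ε) := by
          apply mul_le_mul (abs_kval_le_of_lt hε h.1) (abs_kval_le_of_lt hε h.2.1)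
            (abs_nonneg _) (by positivity)
      _ = 1 / ε ^ 2 := by ring
  · simp; positivity

lemma abs_tk_le {ε : ℝ} (hε : 0 < ε) (i : Fin n) (x y : EuclideanSpace ℝ (Fin n)) :
    |tk i ε x y| ≤ 1 / ε := by
  unfold tk
  split
  · exact abs_kval_le_of_lt hε ‹_›
  · simp; positivity

lemma measurable_kval2 (i : Fin n) :
    Measurable fun p : EuclideanSpace ℝ (Fin n) × EuclideanSpace ℝ (Fin n) =>
      kval i p.1 p.2 := by
  unfold kval
  exact (((EuclideanSpace.proj i).continuous.comp
    (continuous_fst.sub continuous_snd)).measurable).div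
    (((continuous_fst.sub continuous_snd).norm.pow _).measurable)

lemma measurableSet_tr (ε : ℝ) :
    MeasurableSet {p : EuclideanSpace ℝ (Fin n) × EuclideanSpace ℝ (Fin n) | ε < ‖p.1 - p.2‖} :=
  (isOpen_lt continuous_const (continuous_fst.sub continuous_snd).norm).measurableSet

lemma measurable_tk (i : Fin n) (ε : ℝ) :
    Measurable fun p : EuclideanSpace ℝ (Fin n) × EuclideanSpace ℝ (Fin n) =>
      tk i ε p.1 p.2 := by
  unfold tk
  exact Measurable.ite (measurableSet_tr ε) (measurable_kval2 i) measurable_const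

lemma measurable_gk (ε : ℝ) :
    Measurable fun p : EuclideanSpace ℝ (Fin n) × EuclideanSpace ℝ (Fin n) =>
      gk ε p.1 p.2 := by
  unfold gk
  exact Measurable.ite (measurableSet_tr ε)
    (measurable_const.div (((continuous_fst.sub continuous_snd).norm.pow _).measurable))
    measurable_const

end Kernels

/-! ### Measurability of triple kernels -/

section TripleMeas

variable {n : ℕ}

local notation "E" => EuclideanSpace ℝ (Fin n)

lemma measurableSet_tr3_12 (ε : ℝ) : MeasurableSet {p : E × E × E | ε < ‖p.1 - p.2.1‖} := by
  haveI : OpensMeasurableSpace (E × E × E) := inferInstance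
  exact (isOpen_lt continuous_const (continuous_fst.sub (continuous_snd.fst)).norm).measurableSet

lemma measurableSet_tr3_13 (ε : ℝ) : MeasurableSet {p : E × E × E | ε < ‖p.1 - p.2.2‖} := by
  haveI : OpensMeasurableSpace (E × E × E) := inferInstance
  exact (isOpen_lt continuous_const (continuous_fst.sub (continuous_snd.snd)).norm).measurableSet

lemma measurableSet_tr3_23 (ε : ℝ) : MeasurableSet {p : E × E × E | ε < ‖p.2.1 - p.2.2‖} := by
  haveI : OpensMeasurableSpace (E × E × E) := inferInstance
  exact (isOpen_lt continuous_const ((continuous_snd.fst).sub (continuous_snd.snd)).norm).measurableSet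

lemma measurable_kprod (i : Fin n) :
    Measurable fun p : E × E × E => kval i p.1 p.2.1 * kval i p.1 p.2.2 :=
  ((measurable_kval2 i).comp (measurable_fst.prodMk measurable_snd.fst)).mul
    ((measurable_kval2 i).comp (measurable_fst.prodMk measurable_snd.snd))

lemma measurable_Gf (i : Fin n) (ε : ℝ) :
    Measurable fun p : E × E × E => Gf i ε p.1 p.2.1 p.2.2 := by
  unfold Gf
  exact Measurable.ite
    (((measurableSet_tr3_12 ε).inter ((measurableSet_tr3_13 ε).inter (measurableSet_tr3_23 ε))))
    (measurable_kprod i) measurable_const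

lemma measurable_Bf (i : Fin n) (ε : ℝ) :
    Measurable fun p : E × E × E => Bf i ε p.1 p.2.1 p.2.2 := by
  unfold Bf
  exact Measurable.ite
    (((measurableSet_tr3_12 ε).inter ((measurableSet_tr3_13 ε).inter
      (measurableSet_tr3_23 ε).compl)))
    (measurable_kprod i) measurable_const

lemma measurable_Gf_p2 (i : Fin n) (ε : ℝ) :
    Measurable fun p : E × E × E => Gf i ε p.2.1 p.1 p.2.2 := by
  unfold Gf
  haveI : OpensMeasurableSpace (E × E × E) := inferInstance
  refine Measurable.ite ?_ ?_ measurable_const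
  · exact ((isOpen_lt continuous_const ((continuous_snd.fst).sub continuous_fst).norm).measurableSet).inter
      (((isOpen_lt continuous_const ((continuous_snd.fst).sub continuous_snd.snd).norm).measurableSet).inter
        ((isOpen_lt continuous_const (continuous_fst.sub continuous_snd.snd).norm).measurableSet))
  · exact ((measurable_kval2 i).comp (measurable_snd.fst.prodMk measurable_fst)).mul
      ((measurable_kval2 i).comp (measurable_snd.fst.prodMk measurable_snd.snd))

lemma measurable_Gf_p3 (i : Fin n) (ε : ℝ) :
    Measurable fun p : E × E × E => Gf i ε p.2.2 p.1 p.2.1 := by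
  unfold Gf
  haveI : OpensMeasurableSpace (E × E × E) := inferInstance
  refine Measurable.ite ?_ ?_ measurable_const
  · exact ((isOpen_lt continuous_const ((continuous_snd.snd).sub continuous_fst).norm).measurableSet).inter
      (((isOpen_lt continuous_const ((continuous_snd.snd).sub continuous_snd.fst).norm).measurableSet).inter
        ((isOpen_lt continuous_const (continuous_fst.sub continuous_snd.fst).norm).measurableSet))
  · exact ((measurable_kval2 i).comp (measurable_snd.snd.prodMk measurable_fst)).mul
      ((measurable_kval2 i).comp (measurable_snd.snd.prodMk measurable_snd.fst))

end TripleMeas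

/-! ### The growth estimate -/

section Growth

variable {n : ℕ}

local notation "E" => EuclideanSpace ℝ (Fin n)

lemma exists_dyadic {ε t : ℝ} (hε : 0 < ε) (h : ε < t) :
    ∃ k : ℕ, 2 ^ k * ε < t ∧ t ≤ 2 ^ (k + 1) * ε := by
  have hex : ∃ k : ℕ, t ≤ 2 ^ (k + 1) * ε := by
    obtain ⟨m, hm⟩ := pow_unbounded_of_one_lt (t / ε) (one_lt_two (α := ℝ))
    refine ⟨m, ?_⟩
    rw [div_lt_iff₀ hε] at hm
    calc t ≤ 2 ^ m * ε := hm.le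
      _ ≤ 2 ^ (m + 1) * ε := by gcongr <;> [norm_num; omega]
  classical
  let k := Nat.find hex
  refine ⟨k, ?_, Nat.find_spec hex⟩
  rcases Nat.eq_zero_or_pos k with hk | hk
  · rw [hk]; simpa using h
  · have := Nat.find_min hex (m := k - 1) (by omega)
    push_neg at this
    have hk1 : k - 1 + 1 = k := by omega
    rw [hk1] at this
    exact this

lemma key_lintegral (μ : Measure E)
    (growth : ∀ (x : E) (r : ℝ), 0 < r → μ (Metric.closedBall x r) ≤ ENNReal.ofReal r)
    {ε : ℝ} (hε : 0 < ε) (x : E) :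
    ∫⁻ y, ENNReal.ofReal (gk ε x y) ∂μ ≤ ENNReal.ofReal (4 / ε) := by
  classical
  set s : ℕ → Set E :=
    fun k => {y | 2 ^ k * ε < ‖x - y‖ ∧ ‖x - y‖ ≤ 2 ^ (k + 1) * ε} with hs
  have hA : MeasurableSet {y : E | ε < ‖x - y‖} :=
    (isOpen_lt continuous_const (continuous_const.sub continuous_id).norm).measurableSet
  have step1 : (fun y => ENNReal.ofReal (gk ε x y)) =
      Set.indicator {y | ε < ‖x - y‖} (fun y => ENNReal.ofReal (1 / ‖x - y‖ ^ 2)) := by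
    funext y
    by_cases h : ε < ‖x - y‖ <;> simp [gk, h, Set.indicator_apply]
  rw [step1, lintegral_indicator hA]
  have hsub : {y : E | ε < ‖x - y‖} ⊆ ⋃ k, s k := by
    intro y hy
    obtain ⟨k, h1, h2⟩ := exists_dyadic hε hy
    exact Set.mem_iUnion.2 ⟨k, h1, h2⟩
  calc ∫⁻ y in {y | ε < ‖x - y‖}, ENNReal.ofReal (1 / ‖x - y‖ ^ 2) ∂μ
      ≤ ∫⁻ y in ⋃ k, s k, ENNReal.ofReal (1 / ‖x - y‖ ^ 2) ∂μ :=
        lintegral_mono_set hsub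
    _ ≤ ∑' k, ∫⁻ y in s k, ENNReal.ofReal (1 / ‖x - y‖ ^ 2) ∂μ :=
        lintegral_iUnion_le _ _
    _ ≤ ∑' k, ENNReal.ofReal (2 / ε * (1/2 : ℝ) ^ k) := by
        apply ENNReal.tsum_le_tsum
        intro k
        have hpos : (0:ℝ) < 2 ^ k * ε := by positivity
        have hbound : ∫⁻ y in s k, ENNReal.ofReal (1 / ‖x - y‖ ^ 2) ∂μ ≤
            ENNReal.ofReal (1 / (2 ^ k * ε) ^ 2) * μ (s k) := by
          rw [← setLIntegral_const (s k) _]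
          apply setLIntegral_mono (by fun_prop) ?_
          intro y hy
          apply ENNReal.ofReal_le_ofReal
          exact one_div_le_one_div_of_le (by positivity) (by nlinarith [hy.1])
        refine hbound.trans ?_
        have hμ : μ (s k) ≤ ENNReal.ofReal (2 ^ (k + 1) * ε) := by
          refine (measure_mono ?_).trans (growth x (2 ^ (k + 1) * ε) (by positivity))
          intro y hy
          rw [Metric.mem_closedBall, dist_eq_norm, norm_sub_rev]
          exact hy.2
        refine (mul_le_mul_right hμ _).trans ?_
        rw [← ENNReal.ofReal_mul (by positivity)]
        apply ENNReal.ofReal_le_ofReal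
        apply le_of_eq
        have hε' : ε ≠ 0 := hε.ne'
        have h2k : (2:ℝ) ^ k ≠ 0 := by positivity
        rw [one_div_pow]
        field_simp
        ring
    _ = ENNReal.ofReal (4 / ε) := by
        have h1 : ∀ k : ℕ, ENNReal.ofReal (2 / ε * (1/2 : ℝ) ^ k) =
            ENNReal.ofReal (2 / ε) * ENNReal.ofReal (1/2 : ℝ) ^ k := by
          intro k
          rw [ENNReal.ofReal_mul (by positivity), ENNReal.ofReal_pow (by norm_num)]
        simp only [h1]
        rw [ENNReal.tsum_mul_left, ENNReal.tsum_geometric]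
        have h2 : (1 : ℝ≥0∞) - ENNReal.ofReal (1/2) = ENNReal.ofReal (1/2) := by
          rw [← ENNReal.ofReal_one, ← ENNReal.ofReal_sub _ (by norm_num)]
          norm_num
        rw [h2, ← ENNReal.ofReal_inv_of_pos (by norm_num)]
        rw [← ENNReal.ofReal_mul (by positivity)]
        norm_num
        rw [show (2 / ε * 2 : ℝ) = 4 / ε by ring]

lemma key_integral (μ : Measure E)
    (growth : ∀ (x : E) (r : ℝ), 0 < r → μ (Metric.closedBall x r) ≤ ENNReal.ofReal r)
    {ε : ℝ} (hε : 0 < ε) (x : E) :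
    ∫ y, gk ε x y ∂μ ≤ 4 / ε := by
  have hm : Measurable fun y => gk ε x y :=
    Measurable.of_uncurry_left (f := gk ε) (measurable_gk ε)
  rw [integral_eq_lintegral_of_nonneg_ae (Filter.Eventually.of_forall (gk_nonneg ε x))
    hm.aestronglyMeasurable]
  have h := key_lintegral μ growth hε x
  exact (ENNReal.toReal_mono (by simp) h).trans_eq (ENNReal.toReal_ofReal (by positivity))

end Growth

/-! ### Pointwise decompositions -/

section Decomp

variable {n : ℕ}

local notation "E" => EuclideanSpace ℝ (Fin n)

lemma rieszSym_eq (i : Fin n) (x y z : E) :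
    rieszSym i x y z =
      kval i y x * kval i z x + kval i x y * kval i z y + kval i x z * kval i y z := rfl

lemma decomp_rieszSym (i : Fin n) (ε : ℝ) (x y z : E) :
    (if ε < ‖x - y‖ ∧ ε < ‖x - z‖ ∧ ε < ‖y - z‖ then rieszSym i x y z else 0) =
      Gf i ε x y z + Gf i ε y x z + Gf i ε z x y := by
  have nxy : ‖y - x‖ = ‖x - y‖ := norm_sub_rev _ _
  have nxz : ‖z - x‖ = ‖x - z‖ := norm_sub_rev _ _
  have nyz : ‖z - y‖ = ‖y - z‖ := norm_sub_rev _ _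
  unfold Gf
  rw [nxy, nxz, nyz]
  by_cases h1 : ε < ‖x - y‖ <;> by_cases h2 : ε < ‖x - z‖ <;> by_cases h3 : ε < ‖y - z‖ <;>
    simp only [h1, h2, h3, true_and, false_and, and_true, and_false, if_true, if_false,
      if_neg, not_false_iff, add_zero, zero_add] <;> try simp [h1, h2, h3]
  rw [rieszSym_eq]
  rw [kval_antisymm i y x, kval_antisymm i z x, kval_antisymm i z y]
  ring

lemma decomp_tk (i : Fin n) (ε : ℝ) (x y z : E) :
    tk i ε x y * tk i ε x z = Gf i ε x y z + Bf i ε x y z := by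
  unfold tk Gf Bf
  by_cases h1 : ε < ‖x - y‖ <;> by_cases h2 : ε < ‖x - z‖ <;> by_cases h3 : ε < ‖y - z‖ <;>
    simp [h1, h2, h3]

/-- Indicator of the `ε`-neighborhood of the diagonal. -/
noncomputable def bc (ε : ℝ) (y z : E) : ℝ := if dist y z ≤ ε then 1 else 0

lemma bc_nonneg (ε : ℝ) (y z : E) : 0 ≤ bc ε y z := by unfold bc; split <;> norm_num

lemma bc_le_one (ε : ℝ) (y z : E) : bc ε y z ≤ 1 := by unfold bc; split <;> norm_num

lemma bc_comm (ε : ℝ) (y z : E) : bc ε y z = bc ε z y := by unfold bc; rw [dist_comm]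

lemma measurable_bc2 (ε : ℝ) : Measurable fun p : E × E => bc ε p.1 p.2 := by
  unfold bc
  exact Measurable.ite
    ((isClosed_le (continuous_fst.dist continuous_snd) continuous_const).measurableSet)
    measurable_const measurable_const

lemma abs_Bf_le_dom {ε : ℝ} (hε : 0 < ε) (i : Fin n) (x y z : E) :
    |Bf i ε x y z| ≤
      1/2 * (gk ε x y * bc ε y z + gk ε x z * bc ε y z) := by
  unfold Bf
  split
  · rename_i h
    have hbc : bc ε y z = 1 := by
      unfold bc
      rw [if_pos (by rw [dist_eq_norm]; exact not_lt.mp h.2.2)]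
    have hg1 : gk ε x y = 1 / ‖x - y‖ ^ 2 := by unfold gk; rw [if_pos h.1]
    have hg2 : gk ε x z = 1 / ‖x - z‖ ^ 2 := by unfold gk; rw [if_pos h.2.1]
    rw [hbc, hg1, hg2, mul_one, mul_one, abs_mul]
    have ha := abs_kval_le_inv_norm i x y
    have hb := abs_kval_le_inv_norm i x z
    have h1 : |kval i x y| * |kval i x z| ≤ (1 / ‖x - y‖) * (1 / ‖x - z‖) :=
      mul_le_mul ha hb (abs_nonneg _) (by positivity)
    refine h1.trans ?_
    rw [show (1:ℝ) / ‖x - y‖ ^ 2 = (1 / ‖x - y‖) ^ 2 by rw [div_pow, one_pow],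
      show (1:ℝ) / ‖x - z‖ ^ 2 = (1 / ‖x - z‖) ^ 2 by rw [div_pow, one_pow]]
    nlinarith [sq_nonneg (1 / ‖x - y‖ - 1 / ‖x - z‖)]
  · rw [abs_zero]
    apply mul_nonneg (by norm_num)
    exact add_nonneg (mul_nonneg (gk_nonneg _ _ _) (bc_nonneg _ _ _))
      (mul_nonneg (gk_nonneg _ _ _) (bc_nonneg _ _ _))

end Decomp

/-! ### The error bound -/

section ErrorBound

variable {n : ℕ}

local notation "E" => EuclideanSpace ℝ (Fin n)

lemma measurable_ballMeas (μ : Measure E) [IsFiniteMeasure μ] (ε : ℝ) :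
    Measurable fun y : E => (μ {z | dist y z ≤ ε}).toReal := by
  have hS : MeasurableSet {p : E × E | dist p.1 p.2 ≤ ε} :=
    (isClosed_le (continuous_fst.dist continuous_snd) continuous_const).measurableSet
  exact (measurable_measure_prodMk_left hS).ennreal_toReal

lemma ballMeas_le (μ : Measure E)
    (growth : ∀ (x : E) (r : ℝ), 0 < r → μ (Metric.closedBall x r) ≤ ENNReal.ofReal r)
    {ε : ℝ} (hε : 0 < ε) (y : E) : (μ {z | dist y z ≤ ε}).toReal ≤ ε := by
  have hsub : {z | dist y z ≤ ε} ⊆ Metric.closedBall y ε := by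
    intro z hz
    rw [Metric.mem_closedBall, dist_comm]
    exact hz
  exact ENNReal.toReal_le_of_le_ofReal hε.le
    ((measure_mono hsub).trans (growth y ε hε))

lemma ballMeas_le_univ (μ : Measure E) [IsFiniteMeasure μ] (ε : ℝ) (y : E) :
    (μ {z | dist y z ≤ ε}).toReal ≤ (μ Set.univ).toReal :=
  ENNReal.toReal_mono (measure_ne_top μ _) (measure_mono (Set.subset_univ _))

lemma integral_bc (μ : Measure E) (ε : ℝ) (y : E) :
    ∫ z, bc ε y z ∂μ = (μ {z | dist y z ≤ ε}).toReal := by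
  have h1 : (fun z => bc ε y z) = Set.indicator {z | dist y z ≤ ε} (fun _ => (1:ℝ)) := by
    funext z
    by_cases h : dist y z ≤ ε <;> simp [bc, h, Set.indicator_apply]
  have hs : MeasurableSet {z : E | dist y z ≤ ε} := by
    have hc : Continuous fun z : E => dist y z := continuous_const.dist continuous_id
    exact (isClosed_le hc continuous_const).measurableSet
  rw [h1, integral_indicator_const (1:ℝ) hs, smul_eq_mul, mul_one, measureReal_def]

lemma TmD_le (μ : Measure E) [IsFiniteMeasure μ]
    (growth : ∀ (x : E) (r : ℝ), 0 < r → μ (Metric.closedBall x r) ≤ ENNReal.ofReal r)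
    {ε : ℝ} (hε : 0 < ε) :
    Tm μ (fun x y z => gk ε x y * bc ε y z) ≤ 4 * (μ Set.univ).toReal := by
  have hmF : Measurable fun p : E × E × E => gk ε p.1 p.2.1 * bc ε p.2.1 p.2.2 :=
    ((measurable_gk ε).comp (measurable_fst.prodMk measurable_snd.fst)).mul
      ((measurable_bc2 ε).comp (measurable_snd.fst.prodMk measurable_snd.snd))
  have hbF : ∀ x y z : E, |gk ε x y * bc ε y z| ≤ 1 / ε ^ 2 := by
    intro x y z
    rw [abs_mul, abs_of_nonneg (gk_nonneg _ _ _), abs_of_nonneg (bc_nonneg _ _ _)]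
    calc gk ε x y * bc ε y z ≤ (1 / ε ^ 2) * 1 :=
          mul_le_mul (gk_le hε x y) (bc_le_one ε y z) (bc_nonneg ε y z) (by positivity)
      _ = 1 / ε ^ 2 := mul_one _
  have hstep : ∀ x : E, ∫ y, ∫ z, gk ε x y * bc ε y z ∂μ ∂μ ≤ 4 := by
    intro x
    have hgm : Measurable fun y => gk ε x y :=
      Measurable.of_uncurry_left (f := gk ε) (measurable_gk ε)
    have hinner : ∀ y : E, ∫ z, gk ε x y * bc ε y z ∂μ =
        gk ε x y * (μ {z | dist y z ≤ ε}).toReal := by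
      intro y
      rw [integral_const_mul, integral_bc]
    calc ∫ y, ∫ z, gk ε x y * bc ε y z ∂μ ∂μ
        = ∫ y, gk ε x y * (μ {z | dist y z ≤ ε}).toReal ∂μ :=
          integral_congr_ae (Filter.Eventually.of_forall hinner)
      _ ≤ ∫ y, gk ε x y * ε ∂μ := by
          refine integral_mono ?_ ?_ fun y => ?_
          · refine integrable_of_bdd (hgm.mul (measurable_ballMeas μ ε)).aestronglyMeasurable
              (C := (1 / ε ^ 2) * (μ Set.univ).toReal) fun y => ?_
            rw [abs_mul, abs_of_nonneg (gk_nonneg _ _ _),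
              abs_of_nonneg ENNReal.toReal_nonneg]
            exact mul_le_mul (gk_le hε x y) (ballMeas_le_univ μ ε y)
              ENNReal.toReal_nonneg (by positivity)
          · refine integrable_of_bdd (hgm.mul_const ε).aestronglyMeasurable
              (C := (1 / ε ^ 2) * ε) fun y => ?_
            rw [abs_mul, abs_of_nonneg (gk_nonneg _ _ _), abs_of_nonneg hε.le]
            exact mul_le_mul_of_nonneg_right (gk_le hε x y) hε.le
          · exact mul_le_mul_of_nonneg_left (ballMeas_le μ growth hε y) (gk_nonneg _ _ _)
      _ = (∫ y, gk ε x y ∂μ) * ε := integral_mul_const ε _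
      _ ≤ (4 / ε) * ε :=
          mul_le_mul_of_nonneg_right (key_integral μ growth hε x) hε.le
      _ = 4 := div_mul_cancel₀ 4 hε.ne'
  calc Tm μ (fun x y z => gk ε x y * bc ε y z)
      ≤ ∫ _, (4:ℝ) ∂μ := integral_mono (int_outer hmF hbF) (integrable_const 4) hstep
    _ = 4 * (μ Set.univ).toReal := by rw [integral_const, smul_eq_mul, measureReal_def]; ring

end ErrorBound

/-! ### Auxiliary bound for the dominating kernel -/

lemma abs_gkbc_le {n : ℕ} {ε : ℝ} (hε : 0 < ε) (a b c d : EuclideanSpace ℝ (Fin n)) :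
    |gk ε a b * bc ε c d| ≤ 1 / ε ^ 2 := by
  rw [abs_mul, abs_of_nonneg (gk_nonneg _ _ _), abs_of_nonneg (bc_nonneg _ _ _)]
  calc gk ε a b * bc ε c d ≤ (1 / ε ^ 2) * 1 :=
        mul_le_mul (gk_le hε a b) (bc_le_one ε c d) (bc_nonneg ε c d) (by positivity)
    _ = 1 / ε ^ 2 := mul_one _

set_option maxHeartbeats 1600000 in
/-- There is `C = C(n) > 0` such that for every compactly supported finite positive Borel
measure `μ` on `ℝⁿ` with `μ(B(x,r)) ≤ r` for all `x` and `r > 0`, every coordinate `i`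
and every `ε > 0`, `|∫ |R^i_ε(μ)|² dμ − (1/3) p_{i,ε}(μ)| ≤ C μ(ℝⁿ)`. -/
theorem abs_l2_sub_third_truncSym_le (n : ℕ) :
    ∃ C > 0, ∀ μ : Measure (EuclideanSpace ℝ (Fin n)), IsFiniteMeasure μ →
      (∃ K : Set (EuclideanSpace ℝ (Fin n)), IsCompact K ∧ μ Kᶜ = 0) →
      (∀ (x : EuclideanSpace ℝ (Fin n)) (r : ℝ), 0 < r →
        μ (Metric.closedBall x r) ≤ ENNReal.ofReal r) →
      ∀ i : Fin n, ∀ ε > 0,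
        |(∫ x, truncRiesz i ε μ x ^ 2 ∂μ) - (1 / 3) * truncSym i ε μ| ≤
          C * (μ Set.univ).toReal := by
  refine ⟨4, by norm_num, ?_⟩
  intro μ hfin _hcpt growth i ε hε
  haveI := hfin
  -- measurability & boundedness of the two parts
  have hmG := measurable_Gf (n := n) i ε
  have hbG : ∀ x y z : EuclideanSpace ℝ (Fin n), |Gf i ε x y z| ≤ 1 / ε ^ 2 :=
    fun x y z => abs_Gf_le hε x y z
  have hmB := measurable_Bf (n := n) i ε
  have hbB : ∀ x y z : EuclideanSpace ℝ (Fin n), |Bf i ε x y z| ≤ 1 / ε ^ 2 :=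
    fun x y z => abs_Bf_le hε x y z
  -- Step 1: the truncated Riesz transform via the truncated kernel
  have hR : ∀ x, truncRiesz i ε μ x = ∫ y, tk i ε x y ∂μ := by
    intro x
    have hsA : MeasurableSet {y : EuclideanSpace ℝ (Fin n) | ε < ‖x - y‖} := by
      have hc : Continuous fun y : EuclideanSpace ℝ (Fin n) => ‖x - y‖ :=
        (continuous_const.sub continuous_id).norm
      exact (isOpen_lt continuous_const hc).measurableSet
    unfold truncRiesz
    rw [← integral_indicator hsA]
    congr 1
  -- Step 2: the L² norm as a triple integral
  have hLHS : ∫ x, truncRiesz i ε μ x ^ 2 ∂μ =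
      Tm μ (fun x y z => tk i ε x y * tk i ε x z) := by
    unfold Tm
    refine integral_congr_ae (Filter.Eventually.of_forall fun x => ?_)
    dsimp only
    rw [hR x]
    have h2 : ∫ y, ∫ z, tk i ε x y * tk i ε x z ∂μ ∂μ
        = (∫ y, tk i ε x y ∂μ) * (∫ z, tk i ε x z ∂μ) := by
      simp only [integral_const_mul]
      exact integral_mul_const _ _
    rw [pow_two]
    exact h2.symm
  -- Step 3: decomposition into good and bad parts
  have hTm1 : Tm μ (fun x y z => tk i ε x y * tk i ε x z) =
      Tm μ (Gf i ε) + Tm μ (Bf i ε) := by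
    rw [show (fun x y z => tk i ε x y * tk i ε x z) =
        fun x y z => Gf i ε x y z + Bf i ε x y z from
      funext fun x => funext fun y => funext fun z => decomp_tk i ε x y z]
    exact Tm_add hmG hbG hmB hbB
  -- Step 4: symmetrization identity
  have hmG2 : Measurable fun p :
      EuclideanSpace ℝ (Fin n) × EuclideanSpace ℝ (Fin n) × EuclideanSpace ℝ (Fin n) =>
      Gf i ε p.2.1 p.1 p.2.2 :=
    measurable_Gf_p2 i ε
  have hmG3 : Measurable fun p :
      EuclideanSpace ℝ (Fin n) × EuclideanSpace ℝ (Fin n) × EuclideanSpace ℝ (Fin n) =>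
      Gf i ε p.2.2 p.1 p.2.1 :=
    measurable_Gf_p3 i ε
  have hbG2 : ∀ x y z : EuclideanSpace ℝ (Fin n), |Gf i ε y x z| ≤ 1 / ε ^ 2 :=
    fun x y z => abs_Gf_le hε y x z
  have hbG3 : ∀ x y z : EuclideanSpace ℝ (Fin n), |Gf i ε z x y| ≤ 1 / ε ^ 2 :=
    fun x y z => abs_Gf_le hε z x y
  have hsym : truncSym i ε μ = Tm μ (Gf i ε) * 3 := by
    have e1 : truncSym i ε μ =
        Tm μ (fun x y z => Gf i ε x y z + (Gf i ε y x z + Gf i ε z x y)) :=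
      congrArg (Tm μ) (funext fun x => funext fun y => funext fun z => by
        rw [← add_assoc]; exact decomp_rieszSym i ε x y z)
    have e2 : Tm μ (fun x y z => Gf i ε x y z + (Gf i ε y x z + Gf i ε z x y)) =
        Tm μ (Gf i ε) + (Tm μ (fun x y z => Gf i ε y x z) +
          Tm μ (fun x y z => Gf i ε z x y)) := by
      rw [Tm_add hmG hbG (hmG2.add hmG3) (C := 1/ε^2) (D := 1/ε^2 + 1/ε^2)
        (fun x y z => (abs_add_le _ _).trans (add_le_add (hbG2 x y z) (hbG3 x y z)))]
      rw [Tm_add hmG2 hbG2 hmG3 hbG3]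
    have e3 : Tm μ (fun x y z => Gf i ε y x z) = Tm μ (Gf i ε) :=
      (Tm_swap12 hmG hbG).symm
    have e4 : Tm μ (fun x y z => Gf i ε z x y) = Tm μ (Gf i ε) := by
      have s1 : Tm μ (fun x y z => Gf i ε z x y) =
          Tm μ (fun x y z => Gf i ε y x z) := Tm_swap23 hmG3 hbG3
      rw [s1, e3]
    rw [e1, e2, e3, e4]
    ring
  -- Step 5: error bound
  have hmD1 : Measurable fun p :
      EuclideanSpace ℝ (Fin n) × EuclideanSpace ℝ (Fin n) × EuclideanSpace ℝ (Fin n) =>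
      gk ε p.1 p.2.1 * bc ε p.2.1 p.2.2 :=
    ((measurable_gk ε).comp (measurable_fst.prodMk measurable_snd.fst)).mul
      ((measurable_bc2 ε).comp (measurable_snd.fst.prodMk measurable_snd.snd))
  have hmD2 : Measurable fun p :
      EuclideanSpace ℝ (Fin n) × EuclideanSpace ℝ (Fin n) × EuclideanSpace ℝ (Fin n) =>
      gk ε p.1 p.2.2 * bc ε p.2.1 p.2.2 :=
    ((measurable_gk ε).comp (measurable_fst.prodMk measurable_snd.snd)).mul
      ((measurable_bc2 ε).comp (measurable_snd.fst.prodMk measurable_snd.snd))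
  have hbD1 : ∀ x y z : EuclideanSpace ℝ (Fin n), |gk ε x y * bc ε y z| ≤ 1 / ε ^ 2 :=
    fun x y z => abs_gkbc_le hε x y y z
  have hbD2 : ∀ x y z : EuclideanSpace ℝ (Fin n), |gk ε x z * bc ε y z| ≤ 1 / ε ^ 2 :=
    fun x y z => abs_gkbc_le hε x z y z
  have hmDom : Measurable fun p :
      EuclideanSpace ℝ (Fin n) × EuclideanSpace ℝ (Fin n) × EuclideanSpace ℝ (Fin n) =>
      1/2 * (gk ε p.1 p.2.1 * bc ε p.2.1 p.2.2 + gk ε p.1 p.2.2 * bc ε p.2.1 p.2.2) :=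
    (hmD1.add hmD2).const_mul _
  have hbDom : ∀ x y z : EuclideanSpace ℝ (Fin n),
      |1/2 * (gk ε x y * bc ε y z + gk ε x z * bc ε y z)| ≤ 1 / ε ^ 2 := by
    intro x y z
    rw [abs_mul]
    calc |1/2| * |gk ε x y * bc ε y z + gk ε x z * bc ε y z|
        ≤ |1/2| * (1/ε^2 + 1/ε^2) := by
          gcongr
          exact (abs_add_le _ _).trans (add_le_add (hbD1 x y z) (hbD2 x y z))
      _ = 1 / ε ^ 2 := by rw [abs_of_nonneg (by norm_num : (0:ℝ) ≤ 1/2)]; ring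
  have herr : |Tm μ (Bf i ε)| ≤ 4 * (μ Set.univ).toReal := by
    have h1 : |Tm μ (Bf i ε)| ≤
        Tm μ (fun x y z => 1/2 * (gk ε x y * bc ε y z + gk ε x z * bc ε y z)) :=
      Tm_abs_le hmB hbB hmDom hbDom (fun x y z => abs_Bf_le_dom hε i x y z)
    refine h1.trans ?_
    rw [Tm_mul_left (F := fun x y z => gk ε x y * bc ε y z + gk ε x z * bc ε y z),
      Tm_add hmD1 hbD1 hmD2 hbD2]
    have hT1 : Tm μ (fun x y z => gk ε x y * bc ε y z) ≤ 4 * (μ Set.univ).toReal :=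
      TmD_le μ growth hε
    have hT2 : Tm μ (fun x y z => gk ε x z * bc ε y z) ≤ 4 * (μ Set.univ).toReal := by
      have s := Tm_swap23 (μ := μ) (F := fun x y z => gk ε x z * bc ε y z) hmD2 hbD2
      rw [s, show (fun (x y z : EuclideanSpace ℝ (Fin n)) => gk ε x y * bc ε z y) =
          fun x y z => gk ε x y * bc ε y z from
        funext fun x => funext fun y => funext fun z => by rw [bc_comm]]
      exact TmD_le μ growth hε
    linarith
  rw [hLHS, hTm1, hsym]
  have hfinal : Tm μ (Gf i ε) + Tm μ (Bf i ε) - 1/3 * (Tm μ (Gf i ε) * 3) =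
      Tm μ (Bf i ε) := by ring
  rw [hfinal]
  exact herr
end

section
/- Let 0 < α < 1 and let x₁, x₂, x₃ ∈ ℝⁿ be pairwise distinct. Then for every index i with 1 ≤ i ≤ n, p_{α,i}(x₁,x₂,x₃) = 0 if and only if (x₁)_i = (x₂)_i = (x₃)_i, i.e. if and only if the three points lie on a hyperplane perpendicular to the i-th coordinate axis. In particular p_{α,i}(x₁,x₂,x₃) ≥ 0. -/
/-- Strict subadditivity of `t ^ β` for `0 < β < 1`. -/
lemma rpow_strict_subadd (x y β : ℝ) (hx : 0 < x) (hy : 0 < y) (hβ0 : 0 < β) (hβ1 : β < 1) :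
    (x + y) ^ β < x ^ β + y ^ β := by
  have hxy : 0 < x + y := by linarith
  have h1 : (x+y) ^ (β-1) < x ^ (β-1) := Real.rpow_lt_rpow_of_neg hx (by linarith) (by linarith)
  have h2 : (x+y) ^ (β-1) < y ^ (β-1) := Real.rpow_lt_rpow_of_neg hy (by linarith) (by linarith)
  have ex : x ^ β = x * x ^ (β-1) := by
    rw [← Real.rpow_one_add' (le_of_lt hx) (by linarith)]; ring_nf
  have ey : y ^ β = y * y ^ (β-1) := by
    rw [← Real.rpow_one_add' (le_of_lt hy) (by linarith)]; ring_nf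
  have exy : (x+y) ^ β = (x+y) * (x+y) ^ (β-1) := by
    rw [← Real.rpow_one_add' (le_of_lt hxy) (by linarith)]; ring_nf
  rw [ex, ey, exy]
  nlinarith [mul_lt_mul_of_pos_left h1 hx, mul_lt_mul_of_pos_left h2 hy]

/-- The key quadratic-form lemma: if `p, q, r` satisfy the strict triangle inequalities
then the quadratic form `u²r² + v²p² + uv(p²+r²−q²)` is positive definite. -/
lemma riesz_quadratic_key (p q r u v : ℝ) (hp : 0 < p) (hq : 0 < q) (hr : 0 < r)
    (h1 : q < p + r) (h2 : p < q + r) (h3 : r < p + q) :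
    0 ≤ u^2*r^2 + v^2*p^2 + u*v*(p^2+r^2-q^2) ∧
    (u^2*r^2 + v^2*p^2 + u*v*(p^2+r^2-q^2) = 0 ↔ u = 0 ∧ v = 0) := by
  have e1 : 0 < q + r - p := by linarith
  have e2 : 0 < q + p - r := by linarith
  have e3 : 0 < p + r - q := by linarith
  have e4 : 0 < p + r + q := by linarith
  have hD : (p^2+r^2-q^2)^2 < 4*(p^2)*(r^2) := by
    nlinarith [mul_pos (mul_pos e1 e2) (mul_pos e3 e4)]
  have hD2 : (p^2+r^2-q^2)^2 * v^2 ≤ 4*(p^2)*(r^2) * v^2 :=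
    mul_le_mul_of_nonneg_right (le_of_lt hD) (sq_nonneg v)
  constructor
  · nlinarith [sq_nonneg (2*r^2*u + (p^2+r^2-q^2)*v), hD2, sq_nonneg r, sq_nonneg (r*r)]
  · constructor
    · intro h
      have hv : v = 0 := by
        have hle : 4*(p^2)*(r^2) * v^2 ≤ (p^2+r^2-q^2)^2 * v^2 := by
          nlinarith [sq_nonneg (2*r^2*u + (p^2+r^2-q^2)*v)]
        have : v^2 ≤ 0 := by nlinarith
        nlinarith [sq_nonneg v]
      have hu : u = 0 := by
        rw [hv] at h
        have : u^2 ≤ 0 := by nlinarith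
        nlinarith [sq_nonneg u]
      exact ⟨hu, hv⟩
    · rintro ⟨hu, hv⟩; rw [hu, hv]; ring

lemma rpow_sq_of_pos (a β : ℝ) (ha : 0 < a) : a ^ (2*β) = (a ^ β)^2 := by
  rw [← Real.rpow_natCast (a ^ β) 2, ← Real.rpow_mul (le_of_lt ha)]
  norm_num; ring_nf

/-- The α-symmetrization quantity `p_{α,i}(x₁,x₂,x₃)`, built from the scalar kernels
`x_i/|x|^{1+α}`. -/
noncomputable def rieszSymA {n : ℕ} (α : ℝ) (i : Fin n)
    (x₁ x₂ x₃ : EuclideanSpace ℝ (Fin n)) : ℝ :=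
    ((x₂ - x₁) i / ‖x₂ - x₁‖ ^ (1 + α)) * ((x₃ - x₁) i / ‖x₃ - x₁‖ ^ (1 + α)) +
    ((x₁ - x₂) i / ‖x₁ - x₂‖ ^ (1 + α)) * ((x₃ - x₂) i / ‖x₃ - x₂‖ ^ (1 + α)) +
    ((x₁ - x₃) i / ‖x₁ - x₃‖ ^ (1 + α)) * ((x₂ - x₃) i / ‖x₂ - x₃‖ ^ (1 + α))

/-- For `0 < α < 1` and pairwise distinct `x₁, x₂, x₃ ∈ ℝⁿ`, `p_{α,i}(x₁,x₂,x₃) = 0` iff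
the three points have the same `i`-th coordinate (lie on a hyperplane perpendicular to the
`i`-th axis); in particular `p_{α,i}(x₁,x₂,x₃) ≥ 0`. -/
theorem rieszSymA_eq_zero_iff (n : ℕ) (α : ℝ) (hα₀ : 0 < α) (hα₁ : α < 1)
    (x₁ x₂ x₃ : EuclideanSpace ℝ (Fin n))
    (h₁₂ : x₁ ≠ x₂) (h₁₃ : x₁ ≠ x₃) (h₂₃ : x₂ ≠ x₃) (i : Fin n) :
    (rieszSymA α i x₁ x₂ x₃ = 0 ↔ x₁ i = x₂ i ∧ x₂ i = x₃ i) ∧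
    0 ≤ rieszSymA α i x₁ x₂ x₃ := by
  set β : ℝ := (1 + α) / 2 with hβdef
  have hβ0 : 0 < β := by rw [hβdef]; linarith
  have hβ1 : β < 1 := by rw [hβdef]; linarith
  set a : ℝ := ‖x₁ - x₂‖ with hadef
  set b : ℝ := ‖x₁ - x₃‖ with hbdef
  set c : ℝ := ‖x₂ - x₃‖ with hcdef
  have ha : 0 < a := by rw [hadef, norm_pos_iff, sub_ne_zero]; exact h₁₂
  have hb : 0 < b := by rw [hbdef, norm_pos_iff, sub_ne_zero]; exact h₁₃
  have hc : 0 < c := by rw [hcdef, norm_pos_iff, sub_ne_zero]; exact h₂₃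
  set p : ℝ := a ^ β with hpdef
  set q : ℝ := b ^ β with hqdef
  set r : ℝ := c ^ β with hrdef
  have hp : 0 < p := Real.rpow_pos_of_pos ha β
  have hq : 0 < q := Real.rpow_pos_of_pos hb β
  have hr : 0 < r := Real.rpow_pos_of_pos hc β
  -- triangle inequalities on distances
  have tab : b ≤ a + c := by
    rw [hadef, hbdef, hcdef]
    simpa [dist_eq_norm] using dist_triangle x₁ x₂ x₃
  have tbc : a ≤ b + c := by
    rw [hadef, hbdef, hcdef, show ‖x₂ - x₃‖ = ‖x₃ - x₂‖ from norm_sub_rev _ _]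
    simpa [dist_eq_norm] using dist_triangle x₁ x₃ x₂
  have tca : c ≤ b + a := by
    rw [hadef, hbdef, hcdef, show ‖x₁ - x₂‖ = ‖x₂ - x₁‖ from norm_sub_rev _ _,
      show ‖x₁ - x₃‖ = ‖x₂ - x₁‖ + ‖x₁ - x₃‖ - (‖x₂ - x₁‖ + ‖x₁ - x₃‖) + ‖x₁ - x₃‖ by ring]
    have := dist_triangle x₂ x₁ x₃
    simp only [dist_eq_norm] at this
    linarith
  -- strict triangle inequalities for the β-powers
  have h1 : q < p + r := by
    calc q ≤ (a + c) ^ β := Real.rpow_le_rpow (le_of_lt hb) tab (le_of_lt hβ0)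
    _ < p + r := rpow_strict_subadd a c β ha hc hβ0 hβ1
  have h2 : p < q + r := by
    calc p ≤ (b + c) ^ β := Real.rpow_le_rpow (le_of_lt ha) tbc (le_of_lt hβ0)
    _ < q + r := rpow_strict_subadd b c β hb hc hβ0 hβ1
  have h3 : r < p + q := by
    calc r ≤ (b + a) ^ β := Real.rpow_le_rpow (le_of_lt hc) tca (le_of_lt hβ0)
    _ < q + p := rpow_strict_subadd b a β hb ha hβ0 hβ1
    _ = p + q := by ring
  -- rpow rewrites
  have hap : a ^ (1 + α) = p ^ 2 := by
    rw [hpdef, ← rpow_sq_of_pos a β ha, hβdef]; ring_nf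
  have hbq : b ^ (1 + α) = q ^ 2 := by
    rw [hqdef, ← rpow_sq_of_pos b β hb, hβdef]; ring_nf
  have hcr : c ^ (1 + α) = r ^ 2 := by
    rw [hrdef, ← rpow_sq_of_pos c β hc, hβdef]; ring_nf
  set u : ℝ := x₂ i - x₁ i with hudef
  set v : ℝ := x₃ i - x₂ i with hvdef
  have key_eq : rieszSymA α i x₁ x₂ x₃ =
      (u^2*r^2 + v^2*p^2 + u*v*(p^2+r^2-q^2)) / (p^2*q^2*r^2) := by
    unfold rieszSymA
    simp only [PiLp.sub_apply]
    rw [show ‖x₂ - x₁‖ = a by rw [hadef]; exact norm_sub_rev _ _,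
      show ‖x₃ - x₁‖ = b by rw [hbdef]; exact norm_sub_rev _ _,
      show ‖x₃ - x₂‖ = c by rw [hcdef]; exact norm_sub_rev _ _,
      ← hadef, ← hbdef, ← hcdef, hap, hbq, hcr]
    rw [hudef, hvdef]
    field_simp
    ring
  obtain ⟨hnn, hiff⟩ := riesz_quadratic_key p q r u v hp hq hr h1 h2 h3
  have hden : 0 < p^2*q^2*r^2 := by positivity
  constructor
  · rw [key_eq, div_eq_zero_iff]
    constructor
    · rintro (h | h)
      · obtain ⟨hu, hv⟩ := hiff.mp h
        rw [hudef] at hu; rw [hvdef] at hv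
        constructor <;> [linarith [sub_eq_zero.mp hu]; linarith [sub_eq_zero.mp hv]]
      · exact absurd h (ne_of_gt hden)
    · rintro ⟨hx12, hx23⟩
      left
      apply hiff.mpr
      constructor
      · rw [hudef, hx12]; ring
      · rw [hvdef, hx23]; ring
  · rw [key_eq]
    exact div_nonneg hnn (le_of_lt hden)
end

section
/- Let 0 < α ≤ 1. There exists a constant C > 0 depending only on n and α with the following property: for every compactly supported finite positive Borel measure μ on ℝⁿ satisfying μ(B(x,r)) ≤ r^α for all x ∈ ℝⁿ and r > 0, for every index i with 1 ≤ i ≤ n and every ε > 0, one has |∫ |R^i_{α,ε}(μ)(x)|² dμ(x) − (1/3)·p_{α,i,ε}(μ)| ≤ C·μ(ℝⁿ). -/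
open MeasureTheory

/-- The truncated `i`-th scalar `α`-Riesz transform of the measure `μ`:
`R^i_{α,ε}(μ)(x) = ∫_{|y−x|>ε} (x_i−y_i)/|x−y|^{1+α} dμ(y)`. -/
noncomputable def truncRieszA {n : ℕ} (α : ℝ) (i : Fin n) (ε : ℝ)
    (μ : Measure (EuclideanSpace ℝ (Fin n))) (x : EuclideanSpace ℝ (Fin n)) : ℝ :=
    ∫ y in {y | ε < ‖x - y‖}, (x - y) i / ‖x - y‖ ^ (1 + α) ∂μ

/-- The truncated triple symmetrization integral
`p_{α,i,ε}(μ) = ∭_{S_ε} p_{α,i}(x,y,z) dμ(x)dμ(y)dμ(z)`. -/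
noncomputable def truncSymA {n : ℕ} (α : ℝ) (i : Fin n) (ε : ℝ)
    (μ : Measure (EuclideanSpace ℝ (Fin n))) : ℝ :=
    ∫ x, ∫ y, ∫ z,
      (if ε < ‖x - y‖ ∧ ε < ‖x - z‖ ∧ ε < ‖y - z‖ then rieszSymA α i x y z else 0)
      ∂μ ∂μ ∂μ

/- ############ Auxiliary lemmas ############ -/

lemma coordAbsLeNorm {n : ℕ} (i : Fin n) (v : EuclideanSpace ℝ (Fin n)) : |v i| ≤ ‖v‖ := by
  rw [EuclideanSpace.norm_eq, ← Real.sqrt_sq_eq_abs]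
  apply Real.sqrt_le_sqrt
  simp only [Real.norm_eq_abs, sq_abs]
  exact Finset.single_le_sum (f := fun j => v j ^ 2) (fun j _ => sq_nonneg _) (Finset.mem_univ i)

lemma kernelAbsLe {n : ℕ} {α : ℝ} (hα : 0 < α) (i : Fin n)
    (v : EuclideanSpace ℝ (Fin n)) (hv : 0 < ‖v‖) :
    |v i / ‖v‖ ^ (1 + α)| ≤ ‖v‖ ^ (-α) := by
  rw [abs_div, abs_of_nonneg (Real.rpow_nonneg (norm_nonneg v) _)]
  rw [div_le_iff₀ (Real.rpow_pos_of_pos hv _)]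
  calc |v i| ≤ ‖v‖ := coordAbsLeNorm i v
    _ = ‖v‖ ^ (-α + (1 + α)) := by norm_num
    _ = ‖v‖ ^ (-α) * ‖v‖ ^ (1 + α) := Real.rpow_add hv _ _

lemma bddIntegrable {X : Type*} [MeasurableSpace X] (μ : Measure X) [IsFiniteMeasure μ]
    {f : X → ℝ} (hf : AEStronglyMeasurable f μ) {B : ℝ} (hB : ∀ x, |f x| ≤ B) :
    Integrable f μ :=
  ⟨hf, HasFiniteIntegral.of_bounded (C := B)
    (ae_of_all _ (fun x => by simpa [Real.norm_eq_abs] using hB x))⟩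

lemma absIntegralLeConst {X : Type*} [MeasurableSpace X] (μ : Measure X) [IsFiniteMeasure μ]
    (f : X → ℝ) {B : ℝ} (hB : ∀ x, |f x| ≤ B) :
    |∫ x, f x ∂μ| ≤ B * (μ Set.univ).toReal := by
  have := norm_integral_le_of_norm_le_const (μ := μ) (f := f) (C := B)
    (ae_of_all _ (fun x => by simpa [Real.norm_eq_abs] using hB x))
  simpa [Real.norm_eq_abs, measureReal_def] using this

lemma geomSummand (α ε : ℝ) (hε : 0 < ε) (j : ℕ) :
    ((2:ℝ)^j * ε) ^ (-(2*α)) * ((2:ℝ)^(j+1) * ε) ^ α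
      = (2:ℝ)^α * ε^(-α) * ((2:ℝ)^(-α))^j := by
  have hnc : ((2:ℝ)^j) = (2:ℝ) ^ ((j:ℝ)) := (Real.rpow_natCast 2 j).symm
  have l2 : ∀ a b : ℝ, (2:ℝ)^a * (2:ℝ)^b = 2^(a+b) := fun a b => (Real.rpow_add two_pos a b).symm
  have lε : ∀ a b : ℝ, ε^a * ε^b = ε^(a+b) := fun a b => (Real.rpow_add hε a b).symm
  rw [pow_succ, Real.mul_rpow (by positivity) hε.le, Real.mul_rpow (by positivity) hε.le,
    Real.mul_rpow (by positivity) (by norm_num), hnc, ← Real.rpow_natCast ((2:ℝ)^(-α)) j,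
    ← Real.rpow_mul (by norm_num : (0:ℝ) ≤ 2),
    ← Real.rpow_mul (by norm_num : (0:ℝ) ≤ 2),
    ← Real.rpow_mul (by norm_num : (0:ℝ) ≤ 2)]
  calc (2:ℝ) ^ ((j:ℝ) * -(2 * α)) * ε ^ (-(2 * α)) * ((2:ℝ) ^ ((j:ℝ) * α) * 2 ^ α * ε ^ α)
      = ((2:ℝ) ^ ((j:ℝ) * -(2 * α)) * 2 ^ ((j:ℝ) * α) * 2 ^ α) * (ε ^ (-(2*α)) * ε ^ α) := by
        ring
    _ = (2:ℝ) ^ ((j:ℝ) * -(2 * α) + (j:ℝ) * α + α) * ε ^ (-(2*α) + α) := by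
        rw [l2, l2, lε]
    _ = (2:ℝ) ^ (α + (-α) * (j:ℝ)) * ε ^ (-α) := by
        rw [show ((j:ℝ) * -(2 * α) + (j:ℝ) * α + α) = α + (-α) * (j:ℝ) by ring,
          show (-(2*α) + α) = -α by ring]
    _ = (2:ℝ)^α * ε^(-α) * (2:ℝ)^((-α) * (j:ℝ)) := by rw [← l2]; ring
    _ = (2:ℝ)^α * ε^(-α) * (2:ℝ)^(-α * (j:ℝ)) := rfl

lemma dyadicBound {n : ℕ} {α ε : ℝ} (hα : 0 < α) (hε : 0 < ε)
    (μ : Measure (EuclideanSpace ℝ (Fin n)))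
    (hgrow : ∀ (x : EuclideanSpace ℝ (Fin n)) (r : ℝ), 0 < r →
      μ (Metric.closedBall x r) ≤ ENNReal.ofReal (r ^ α))
    (x : EuclideanSpace ℝ (Fin n)) :
    ∫⁻ y, ENNReal.ofReal (if ε < ‖x - y‖ then ‖x - y‖ ^ (-(2*α)) else 0) ∂μ ≤
      ENNReal.ofReal ((2:ℝ)^α * ε^(-α) * (1 - (2:ℝ)^(-α))⁻¹) := by
  classical
  set S : ℕ → Set (EuclideanSpace ℝ (Fin n)) :=
    fun j => {y | 2^j * ε < ‖x - y‖ ∧ ‖x - y‖ ≤ 2^(j+1) * ε} with hS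
  have hnorm : Continuous fun y : EuclideanSpace ℝ (Fin n) => ‖x - y‖ := by fun_prop
  have hsub : {y : EuclideanSpace ℝ (Fin n) | ε < ‖x - y‖} ⊆ ⋃ j, S j := by
    intro y hy
    have hy' : ε < ‖x - y‖ := hy
    have hex : ∃ m : ℕ, ‖x - y‖ ≤ 2^(m+1) * ε := by
      obtain ⟨m, hm⟩ := pow_unbounded_of_one_lt (‖x - y‖ / ε) (one_lt_two (α := ℝ))
      rw [div_lt_iff₀ hε] at hm
      exact ⟨m, le_trans hm.le (mul_le_mul_of_nonneg_right
        (pow_le_pow_right₀ (one_le_two (α := ℝ)) (Nat.le_succ m)) hε.le)⟩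
    set j := Nat.find hex with hj
    refine Set.mem_iUnion.2 ⟨j, ?_, Nat.find_spec hex⟩
    rcases Nat.eq_zero_or_pos j with h0 | hpos
    · rw [h0]; simpa using hy'
    · have := Nat.find_min hex (m := j - 1) (by omega)
      push_neg at this
      calc (2:ℝ)^j * ε = 2^(j-1+1) * ε := by rw [Nat.sub_add_cancel hpos]
        _ < ‖x - y‖ := this
  have hSball : ∀ j, S j ⊆ Metric.closedBall x (2^(j+1) * ε) := by
    intro j y hy
    have : ‖x - y‖ ≤ 2^(j+1)*ε := hy.2
    simpa [Metric.mem_closedBall, dist_comm, dist_eq_norm] using this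
  have hmeasset : MeasurableSet {y : EuclideanSpace ℝ (Fin n) | ε < ‖x - y‖} :=
    measurableSet_lt measurable_const hnorm.measurable
  calc ∫⁻ y, ENNReal.ofReal (if ε < ‖x - y‖ then ‖x - y‖ ^ (-(2*α)) else 0) ∂μ
      = ∫⁻ y in {y : EuclideanSpace ℝ (Fin n) | ε < ‖x - y‖},
          ENNReal.ofReal (‖x - y‖ ^ (-(2*α))) ∂μ := by
        rw [← lintegral_indicator hmeasset]
        congr 1; ext y
        by_cases h : ε < ‖x - y‖ <;> simp [Set.indicator_apply, h]
    _ ≤ ∫⁻ y in ⋃ j, S j, ENNReal.ofReal (‖x - y‖ ^ (-(2*α))) ∂μ := lintegral_mono_set hsub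
    _ ≤ ∑' j, ∫⁻ y in S j, ENNReal.ofReal (‖x - y‖ ^ (-(2*α))) ∂μ := lintegral_iUnion_le _ _
    _ ≤ ∑' j, ENNReal.ofReal ((2:ℝ)^α * ε^(-α)) * ENNReal.ofReal ((2:ℝ)^(-α)) ^ j := by
        refine ENNReal.tsum_le_tsum fun j => ?_
        have h2jε : (0:ℝ) < 2^j * ε := by positivity
        have hb1 : ∫⁻ y in S j, ENNReal.ofReal (‖x - y‖ ^ (-(2*α))) ∂μ ≤
            ∫⁻ _ in S j, ENNReal.ofReal ((2^j * ε) ^ (-(2*α))) ∂μ := by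
          refine setLIntegral_mono measurable_const fun y hy => ?_
          exact ENNReal.ofReal_le_ofReal
            (Real.rpow_le_rpow_of_nonpos h2jε hy.1.le (by nlinarith))
        refine hb1.trans ?_
        rw [setLIntegral_const]
        have hμS : μ (S j) ≤ ENNReal.ofReal ((2^(j+1) * ε) ^ α) :=
          (measure_mono (hSball j)).trans (hgrow x _ (by positivity))
        calc ENNReal.ofReal ((2^j*ε) ^ (-(2*α))) * μ (S j)
            ≤ ENNReal.ofReal ((2^j*ε) ^ (-(2*α))) * ENNReal.ofReal ((2^(j+1) * ε) ^ α) :=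
              mul_le_mul_right hμS _
          _ = ENNReal.ofReal ((2^j*ε) ^ (-(2*α)) * (2^(j+1) * ε) ^ α) :=
              (ENNReal.ofReal_mul (by positivity)).symm
          _ = ENNReal.ofReal ((2:ℝ)^α * ε^(-α) * ((2:ℝ)^(-α))^j) := by
              rw [geomSummand α ε hε j]
          _ = ENNReal.ofReal ((2:ℝ)^α * ε^(-α)) * ENNReal.ofReal ((2:ℝ)^(-α)) ^ j := by
              rw [ENNReal.ofReal_mul (by positivity), ENNReal.ofReal_pow (by positivity)]
    _ = ENNReal.ofReal ((2:ℝ)^α * ε^(-α)) * (1 - ENNReal.ofReal ((2:ℝ)^(-α)))⁻¹ := by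
        rw [ENNReal.tsum_mul_left, ENNReal.tsum_geometric]
    _ = ENNReal.ofReal ((2:ℝ)^α * ε^(-α) * (1 - (2:ℝ)^(-α))⁻¹) := by
        have h1 : (2:ℝ)^(-α) < 1 := by
          apply Real.rpow_lt_one_of_one_lt_of_neg one_lt_two (by linarith)
        have h2 : (1 : ENNReal) - ENNReal.ofReal ((2:ℝ)^(-α))
            = ENNReal.ofReal (1 - (2:ℝ)^(-α)) := by
          rw [ENNReal.ofReal_sub _ (by positivity), ENNReal.ofReal_one]
        rw [h2, ← ENNReal.ofReal_inv_of_pos (by linarith),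
          ← ENNReal.ofReal_mul (by positivity)]
set_option maxHeartbeats 2000000 in
/-- For `0 < α ≤ 1` there is `C = C(n,α) > 0` such that for every compactly supported
finite positive Borel measure `μ` on `ℝⁿ` with `μ(B(x,r)) ≤ r^α`, every coordinate `i`
and every `ε > 0`, `|∫ |R^i_{α,ε}(μ)|² dμ − (1/3) p_{α,i,ε}(μ)| ≤ C μ(ℝⁿ)`. -/
theorem abs_l2_sub_third_truncSymA_le (n : ℕ) (α : ℝ) (hα₀ : 0 < α) (hα₁ : α ≤ 1) :
    ∃ C > 0, ∀ μ : Measure (EuclideanSpace ℝ (Fin n)), IsFiniteMeasure μ →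
      (∃ K : Set (EuclideanSpace ℝ (Fin n)), IsCompact K ∧ μ Kᶜ = 0) →
      (∀ (x : EuclideanSpace ℝ (Fin n)) (r : ℝ), 0 < r →
        μ (Metric.closedBall x r) ≤ ENNReal.ofReal (r ^ α)) →
      ∀ i : Fin n, ∀ ε > 0,
        |(∫ x, truncRieszA α i ε μ x ^ 2 ∂μ) - (1 / 3) * truncSymA α i ε μ| ≤
          C * (μ Set.univ).toReal := by
  classical
  have h2α1 : (2:ℝ)^(-α) < 1 :=
    Real.rpow_lt_one_of_one_lt_of_neg one_lt_two (by linarith)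
  refine ⟨(2:ℝ)^α * (2:ℝ)^α * (1 - (2:ℝ)^(-α))⁻¹,
    mul_pos (mul_pos (Real.rpow_pos_of_pos two_pos α) (Real.rpow_pos_of_pos two_pos α))
      (inv_pos.2 (by linarith)), ?_⟩
  intro μ hfin _hcpt hgrow i ε hε
  haveI := hfin
  set m := (μ Set.univ).toReal with hm
  have hm0 : 0 ≤ m := ENNReal.toReal_nonneg
  -- kernels
  obtain ⟨k, hkdef⟩ : ∃ k' : EuclideanSpace ℝ (Fin n) → EuclideanSpace ℝ (Fin n) → ℝ,
      k' = fun x y => if ε < ‖x - y‖ then (x - y) i / ‖x - y‖ ^ (1 + α) else 0 := ⟨_, rfl⟩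
  obtain ⟨e, hedef⟩ : ∃ e' : EuclideanSpace ℝ (Fin n) → EuclideanSpace ℝ (Fin n) → ℝ,
      e' = fun a b => if ε < ‖a - b‖ then 1 else 0 := ⟨_, rfl⟩
  obtain ⟨T, hTdef⟩ : ∃ T' : EuclideanSpace ℝ (Fin n) → EuclideanSpace ℝ (Fin n) →
      EuclideanSpace ℝ (Fin n) → ℝ, T' = fun x y z => e y z * (k y x * k z x) := ⟨_, rfl⟩
  obtain ⟨F, hFdef⟩ : ∃ F' : EuclideanSpace ℝ (Fin n) → EuclideanSpace ℝ (Fin n) →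
      EuclideanSpace ℝ (Fin n) → ℝ, F' = fun x y z => (1 - e y z) * (k x y * k x z) := ⟨_, rfl⟩
  obtain ⟨G, hGdef⟩ : ∃ G' : EuclideanSpace ℝ (Fin n) → EuclideanSpace ℝ (Fin n) → ℝ,
      G' = fun x y => if ε < ‖x - y‖ then ‖x - y‖ ^ (-(2*α)) else 0 := ⟨_, rfl⟩
  -- basic bounds
  have hε' : (0:ℝ) < ε ^ (-α) := Real.rpow_pos_of_pos hε _
  have hkb : ∀ x y, |k x y| ≤ ε ^ (-α) := by
    intro x y
    by_cases h : ε < ‖x - y‖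
    · simp only [hkdef, if_pos h]
      exact (kernelAbsLe hα₀ i _ (lt_trans hε h)).trans
        (Real.rpow_le_rpow_of_nonpos hε h.le (by linarith))
    · simp only [hkdef, if_neg h, abs_zero]; exact hε'.le
  have heb : ∀ a b, |e a b| ≤ 1 := by
    intro a b; by_cases h : ε < ‖a - b‖ <;> simp [hedef, h]
  have heb' : ∀ a b, |1 - e a b| ≤ 1 := by
    intro a b; by_cases h : ε < ‖a - b‖ <;> simp [hedef, h]
  have hBdef : (True) := trivial
  set B : ℝ := ε ^ (-α) * ε ^ (-α)
  have hB0 : 0 ≤ B := by positivity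
  have hTb : ∀ a b c, |T a b c| ≤ B := by
    intro a b c
    calc |T a b c| = |e b c| * (|k b a| * |k c a|) := by
          rw [hTdef]; simp only [abs_mul]
      _ ≤ 1 * (ε ^ (-α) * ε ^ (-α)) := by
          gcongr <;> [exact heb b c; exact hkb b a; exact hkb c a]
      _ = B := by rw [one_mul]
  have hPb : ∀ a b c, |k a b * k a c| ≤ B := by
    intro a b c
    calc |k a b * k a c| = |k a b| * |k a c| := abs_mul _ _
      _ ≤ ε ^ (-α) * ε ^ (-α) := by gcongr <;> [exact hkb a b; exact hkb a c]
  have hFb : ∀ a b c, |F a b c| ≤ B := by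
    intro a b c
    calc |F a b c| = |1 - e b c| * |k a b * k a c| := by rw [hFdef]; exact abs_mul _ _
      _ ≤ 1 * B := mul_le_mul (heb' b c) (hPb a b c) (abs_nonneg _) zero_le_one
      _ = B := one_mul B
  -- measurability
  have hkP : Measurable fun p : EuclideanSpace ℝ (Fin n) × EuclideanSpace ℝ (Fin n) =>
      k p.1 p.2 := by
    rw [hkdef]
    apply Measurable.ite
    · exact measurableSet_lt measurable_const (by fun_prop)
    · fun_prop
    · exact measurable_const
  have heP : Measurable fun p : EuclideanSpace ℝ (Fin n) × EuclideanSpace ℝ (Fin n) =>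
      e p.1 p.2 := by
    rw [hedef]
    apply Measurable.ite
    · exact measurableSet_lt measurable_const (by fun_prop)
    · exact measurable_const
    · exact measurable_const
  have hkz1 : ∀ a, Measurable fun z => k a z :=
    fun a => hkP.comp (measurable_const.prodMk measurable_id)
  have hkz2 : ∀ a, Measurable fun z => k z a :=
    fun a => hkP.comp (measurable_id.prodMk measurable_const)
  have hez1 : ∀ a, Measurable fun z => e a z :=
    fun a => heP.comp (measurable_const.prodMk measurable_id)
  -- projections on (E×E)×E
  have hπ1 : Measurable fun w : (EuclideanSpace ℝ (Fin n) × EuclideanSpace ℝ (Fin n)) ×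
      EuclideanSpace ℝ (Fin n) => w.1.1 := measurable_fst.fst
  have hπ2 : Measurable fun w : (EuclideanSpace ℝ (Fin n) × EuclideanSpace ℝ (Fin n)) ×
      EuclideanSpace ℝ (Fin n) => w.1.2 := measurable_fst.snd
  have hπ3 : Measurable fun w : (EuclideanSpace ℝ (Fin n) × EuclideanSpace ℝ (Fin n)) ×
      EuclideanSpace ℝ (Fin n) => w.2 := measurable_snd
  -- integrability helper on μ
  have intz : ∀ (g : EuclideanSpace ℝ (Fin n) → ℝ), Measurable g → (∀ w, |g w| ≤ B) →
      Integrable g μ := fun g hg hb => bddIntegrable μ hg.aestronglyMeasurable hb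
  -- strongly measurable double integrals
  have smInt : ∀ (Φ : (EuclideanSpace ℝ (Fin n) × EuclideanSpace ℝ (Fin n)) →
      EuclideanSpace ℝ (Fin n) → ℝ),
      Measurable (fun w : (EuclideanSpace ℝ (Fin n) × EuclideanSpace ℝ (Fin n)) ×
        EuclideanSpace ℝ (Fin n) => Φ w.1 w.2) →
      StronglyMeasurable (fun p : EuclideanSpace ℝ (Fin n) × EuclideanSpace ℝ (Fin n) =>
        ∫ z, Φ p z ∂μ) :=
    fun Φ hΦ => hΦ.stronglyMeasurable.integral_prod_right'
  have smInt1 : ∀ (Φ : EuclideanSpace ℝ (Fin n) → EuclideanSpace ℝ (Fin n) → ℝ),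
      Measurable (fun w : EuclideanSpace ℝ (Fin n) × EuclideanSpace ℝ (Fin n) =>
        Φ w.1 w.2) →
      StronglyMeasurable (fun y : EuclideanSpace ℝ (Fin n) => ∫ z, Φ y z ∂μ) :=
    fun Φ hΦ => hΦ.stronglyMeasurable.integral_prod_right'
  -- bound for single integrals
  have hIb : ∀ (g : EuclideanSpace ℝ (Fin n) → ℝ) (B' : ℝ), (∀ w, |g w| ≤ B') →
      |∫ w, g w ∂μ| ≤ B' * m := fun g B' hb => absIntegralLeConst μ g hb

  -- pointwise kernel facts
  have hkneg : ∀ a b, k a b = - k b a := by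
    intro a b
    rw [hkdef]
    simp only [norm_sub_rev a b]
    by_cases h : ε < ‖b - a‖
    · rw [if_pos h, if_pos h]
      have hc : (a - b) i = -((b - a) i) := by
        have : a - b = -(b - a) := by abel
        rw [this]; simp
      rw [hc]; ring
    · rw [if_neg h, if_neg h]; ring
  -- truncated Riesz transform as integral of k
  have hR : ∀ x, truncRieszA α i ε μ x = ∫ y, k x y ∂μ := by
    intro x
    rw [truncRieszA, ← integral_indicator
      (measurableSet_lt measurable_const
        (by fun_prop : Continuous fun y : EuclideanSpace ℝ (Fin n) => ‖x - y‖).measurable)]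
    refine integral_congr_ae (ae_of_all _ fun y => ?_)
    rw [hkdef]
    by_cases h : ε < ‖x - y‖ <;> simp [Set.indicator_apply, h]
  have hAX : ∀ x, truncRieszA α i ε μ x ^ 2 = ∫ y, ∫ z, k x y * k x z ∂μ ∂μ := by
    intro x
    rw [hR x]
    have h1 : ∀ y, ∫ z, k x y * k x z ∂μ = k x y * ∫ z, k x z ∂μ :=
      fun y => integral_const_mul _ _
    calc (∫ y, k x y ∂μ)^2 = ∫ y, k x y * ∫ z, k x z ∂μ ∂μ := by
          rw [integral_mul_const]; ring
      _ = ∫ y, ∫ z, k x y * k x z ∂μ ∂μ := (integral_congr_ae (ae_of_all _ h1)).symm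
  have hA : ∫ x, truncRieszA α i ε μ x ^ 2 ∂μ = ∫ x, ∫ y, ∫ z, k x y * k x z ∂μ ∂μ ∂μ :=
    integral_congr_ae (ae_of_all _ hAX)
  -- splitting of the symmetrization integrand
  have hQsplit : ∀ x y z : EuclideanSpace ℝ (Fin n),
      (if ε < ‖x - y‖ ∧ ε < ‖x - z‖ ∧ ε < ‖y - z‖ then rieszSymA α i x y z else 0)
        = T x y z + T y x z + T z x y := by
    intro x y z
    have n1 : ‖y - x‖ = ‖x - y‖ := norm_sub_rev y x
    have n2 : ‖z - x‖ = ‖x - z‖ := norm_sub_rev z x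
    have n3 : ‖z - y‖ = ‖y - z‖ := norm_sub_rev z y
    rw [hTdef, hedef, hkdef]
    simp only [n1, n2, n3]
    by_cases h1 : ε < ‖x - y‖ <;> by_cases h2 : ε < ‖x - z‖ <;> by_cases h3 : ε < ‖y - z‖ <;>
      simp [h1, h2, h3, rieszSymA, n1, n2, n3] <;> ring
  -- z-level integrability
  have intzT1 : ∀ x y, Integrable (fun z => T x y z) μ := by
    intro x y
    refine intz _ ?_ (fun z => hTb x y z)
    simp only [hTdef]
    exact (hez1 y).mul (measurable_const.mul (hkz2 x))
  have intzT2 : ∀ x y, Integrable (fun z => T y x z) μ := by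
    intro x y
    refine intz _ ?_ (fun z => hTb y x z)
    simp only [hTdef]
    exact (hez1 x).mul (measurable_const.mul (hkz2 y))
  have intzT3 : ∀ x y, Integrable (fun z => T z x y) μ := by
    intro x y
    refine intz _ ?_ (fun z => hTb z x y)
    simp only [hTdef]
    exact measurable_const.mul ((hkz1 x).mul (hkz1 y))
  have intzP : ∀ x y, Integrable (fun z => k x y * k x z) μ := by
    intro x y
    exact intz _ (measurable_const.mul (hkz1 x)) (fun z => hPb x y z)
  have intzF : ∀ x y, Integrable (fun z => F x y z) μ := by
    intro x y
    refine intz _ ?_ (fun z => hFb x y z)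
    simp only [hFdef]
    exact (measurable_const.sub (hez1 y)).mul (measurable_const.mul (hkz1 x))
  -- y-level strong measurability and integrability
  have smY1 : ∀ x, StronglyMeasurable fun y => ∫ z, T x y z ∂μ := by
    intro x
    refine smInt1 (fun y z => T x y z) ?_
    simp only [hTdef]
    exact heP.mul ((hkP.comp (measurable_fst.prodMk measurable_const)).mul
      (hkP.comp (measurable_snd.prodMk measurable_const)))
  have smY2 : ∀ x, StronglyMeasurable fun y => ∫ z, T y x z ∂μ := by
    intro x
    refine smInt1 (fun y z => T y x z) ?_
    simp only [hTdef]
    exact (heP.comp (measurable_const.prodMk measurable_snd)).mul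
      ((hkP.comp (measurable_const.prodMk measurable_fst)).mul
        (hkP.comp (measurable_snd.prodMk measurable_fst)))
  have smY3 : ∀ x, StronglyMeasurable fun y => ∫ z, T z x y ∂μ := by
    intro x
    refine smInt1 (fun y z => T z x y) ?_
    simp only [hTdef]
    exact (heP.comp (measurable_const.prodMk measurable_fst)).mul
      ((hkP.comp (measurable_const.prodMk measurable_snd)).mul hkP)
  have smYP : ∀ x, StronglyMeasurable fun y => ∫ z, k x y * k x z ∂μ := by
    intro x
    refine smInt1 (fun y z => k x y * k x z) ?_
    exact (hkP.comp (measurable_const.prodMk measurable_fst)).mul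
      (hkP.comp (measurable_const.prodMk measurable_snd))
  have intY1 : ∀ x, Integrable (fun y => ∫ z, T x y z ∂μ) μ := fun x =>
    bddIntegrable μ (smY1 x).aestronglyMeasurable (fun y => hIb _ B (hTb x y))
  have intY2 : ∀ x, Integrable (fun y => ∫ z, T y x z ∂μ) μ := fun x =>
    bddIntegrable μ (smY2 x).aestronglyMeasurable (fun y => hIb _ B (hTb y x))
  have intY3 : ∀ x, Integrable (fun y => ∫ z, T z x y ∂μ) μ := fun x =>
    bddIntegrable μ (smY3 x).aestronglyMeasurable (fun y => hIb _ B (fun z => hTb z x y))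
  have intYP : ∀ x, Integrable (fun y => ∫ z, k x y * k x z ∂μ) μ := fun x =>
    bddIntegrable μ (smYP x).aestronglyMeasurable (fun y => hIb _ B (hPb x y))
  -- (E×E)-level strong measurability of double integrals
  have smq1 : StronglyMeasurable fun q : EuclideanSpace ℝ (Fin n) × EuclideanSpace ℝ (Fin n) =>
      ∫ z, T q.1 q.2 z ∂μ := by
    refine smInt (fun q z => T q.1 q.2 z) ?_
    simp only [hTdef]
    exact (heP.comp (hπ2.prodMk hπ3)).mul
      ((hkP.comp (hπ2.prodMk hπ1)).mul (hkP.comp (hπ3.prodMk hπ1)))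
  have smq2 : StronglyMeasurable fun q : EuclideanSpace ℝ (Fin n) × EuclideanSpace ℝ (Fin n) =>
      ∫ z, T q.2 q.1 z ∂μ := by
    refine smInt (fun q z => T q.2 q.1 z) ?_
    simp only [hTdef]
    exact (heP.comp (hπ1.prodMk hπ3)).mul
      ((hkP.comp (hπ1.prodMk hπ2)).mul (hkP.comp (hπ3.prodMk hπ2)))
  have smq3 : StronglyMeasurable fun q : EuclideanSpace ℝ (Fin n) × EuclideanSpace ℝ (Fin n) =>
      ∫ z, T z q.1 q.2 ∂μ := by
    refine smInt (fun q z => T z q.1 q.2) ?_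
    simp only [hTdef]
    exact (heP.comp (hπ1.prodMk hπ2)).mul
      ((hkP.comp (hπ1.prodMk hπ3)).mul (hkP.comp (hπ2.prodMk hπ3)))
  have smqP : StronglyMeasurable fun q : EuclideanSpace ℝ (Fin n) × EuclideanSpace ℝ (Fin n) =>
      ∫ z, k q.1 q.2 * k q.1 z ∂μ := by
    refine smInt (fun q z => k q.1 q.2 * k q.1 z) ?_
    exact (hkP.comp (hπ1.prodMk hπ2)).mul (hkP.comp (hπ1.prodMk hπ3))
  -- x-level integrability
  have intX1 : Integrable (fun x => ∫ y, ∫ z, T x y z ∂μ ∂μ) μ :=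
    bddIntegrable μ smq1.integral_prod_right'.aestronglyMeasurable
      (fun x => hIb _ (B * m) (fun y => hIb _ B (hTb x y)))
  have intX2 : Integrable (fun x => ∫ y, ∫ z, T y x z ∂μ ∂μ) μ :=
    bddIntegrable μ smq2.integral_prod_right'.aestronglyMeasurable
      (fun x => hIb _ (B * m) (fun y => hIb _ B (hTb y x)))
  have intX3 : Integrable (fun x => ∫ y, ∫ z, T z x y ∂μ ∂μ) μ :=
    bddIntegrable μ smq3.integral_prod_right'.aestronglyMeasurable
      (fun x => hIb _ (B * m) (fun y => hIb _ B (fun z => hTb z x y)))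
  have intXP : Integrable (fun x => ∫ y, ∫ z, k x y * k x z ∂μ ∂μ) μ :=
    bddIntegrable μ smqP.integral_prod_right'.aestronglyMeasurable
      (fun x => hIb _ (B * m) (fun y => hIb _ B (hPb x y)))
  -- step 1 : linearity
  have step1 : truncSymA α i ε μ
      = (∫ x, ∫ y, ∫ z, T x y z ∂μ ∂μ ∂μ) + (∫ x, ∫ y, ∫ z, T y x z ∂μ ∂μ ∂μ)
        + (∫ x, ∫ y, ∫ z, T z x y ∂μ ∂μ ∂μ) := by
    rw [truncSymA]
    have hz2 : ∀ x y, (∫ z, (T x y z + T y x z + T z x y) ∂μ)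
        = (∫ z, T x y z ∂μ) + (∫ z, T y x z ∂μ) + (∫ z, T z x y ∂μ) := by
      intro x y
      have ha : Integrable (fun z => T x y z + T y x z) μ := (intzT1 x y).add (intzT2 x y)
      rw [integral_add ha (intzT3 x y), integral_add (intzT1 x y) (intzT2 x y)]
    have hy2 : ∀ x, (∫ y, ((∫ z, T x y z ∂μ) + (∫ z, T y x z ∂μ) + (∫ z, T z x y ∂μ)) ∂μ)
        = (∫ y, ∫ z, T x y z ∂μ ∂μ) + (∫ y, ∫ z, T y x z ∂μ ∂μ)
          + (∫ y, ∫ z, T z x y ∂μ ∂μ) := by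
      intro x
      have ha : Integrable (fun y => (∫ z, T x y z ∂μ) + (∫ z, T y x z ∂μ)) μ :=
        (intY1 x).add (intY2 x)
      rw [integral_add ha (intY3 x), integral_add (intY1 x) (intY2 x)]
    simp only [hQsplit, hz2, hy2]
    have ha : Integrable (fun x => (∫ y, ∫ z, T x y z ∂μ ∂μ) + (∫ y, ∫ z, T y x z ∂μ ∂μ)) μ :=
      intX1.add intX2
    rw [integral_add ha intX3, integral_add intX1 intX2]
  -- step 2 : second term equals the first by Fubini
  have intSwap2 : Integrable (Function.uncurry fun x y => ∫ z, T y x z ∂μ) (μ.prod μ) :=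
    bddIntegrable (μ.prod μ) smq2.aestronglyMeasurable
      (fun p => hIb _ B (hTb p.2 p.1))
  have step2 : (∫ x, ∫ y, ∫ z, T y x z ∂μ ∂μ ∂μ) = ∫ x, ∫ y, ∫ z, T x y z ∂μ ∂μ ∂μ :=
    integral_integral_swap intSwap2
  -- step 3 : third term equals the first by Fubini (two swaps)
  have intSwap3a : ∀ x, Integrable (Function.uncurry fun y z => T z x y) (μ.prod μ) := by
    intro x
    refine bddIntegrable (μ.prod μ) ?_ (fun w => hTb w.2 x w.1)
    refine Measurable.aestronglyMeasurable ?_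
    simp only [hTdef, Function.uncurry]
    exact (heP.comp (measurable_const.prodMk measurable_fst)).mul
      ((hkP.comp (measurable_const.prodMk measurable_snd)).mul hkP)
  have intSwap3b : Integrable (Function.uncurry fun x z => ∫ y, T z x y ∂μ) (μ.prod μ) :=
    bddIntegrable (μ.prod μ) smq2.aestronglyMeasurable
      (fun p => hIb _ B (fun y => hTb p.2 p.1 y))
  have step3 : (∫ x, ∫ y, ∫ z, T z x y ∂μ ∂μ ∂μ) = ∫ x, ∫ y, ∫ z, T x y z ∂μ ∂μ ∂μ := by
    have h1 : ∀ x, (∫ y, ∫ z, T z x y ∂μ ∂μ) = ∫ z, ∫ y, T z x y ∂μ ∂μ :=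
      fun x => integral_integral_swap (intSwap3a x)
    calc (∫ x, ∫ y, ∫ z, T z x y ∂μ ∂μ ∂μ) = ∫ x, ∫ z, ∫ y, T z x y ∂μ ∂μ ∂μ :=
          integral_congr_ae (ae_of_all _ h1)
      _ = ∫ z, ∫ x, ∫ y, T z x y ∂μ ∂μ ∂μ := integral_integral_swap intSwap3b
  have hsym : truncSymA α i ε μ = 3 * ∫ x, ∫ y, ∫ z, T x y z ∂μ ∂μ ∂μ := by
    rw [step1, step2, step3]; ring
  -- the difference is a triple integral of F
  have hdiff : (∫ x, truncRieszA α i ε μ x ^ 2 ∂μ) - 1 / 3 * truncSymA α i ε μ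
      = ∫ x, ∫ y, ∫ z, F x y z ∂μ ∂μ ∂μ := by
    rw [hA, hsym,
      show (1:ℝ) / 3 * (3 * ∫ x, ∫ y, ∫ z, T x y z ∂μ ∂μ ∂μ)
        = ∫ x, ∫ y, ∫ z, T x y z ∂μ ∂μ ∂μ by ring,
      ← integral_sub intXP intX1]
    refine integral_congr_ae (ae_of_all _ fun x => ?_)
    show (∫ y, ∫ z, k x y * k x z ∂μ ∂μ) - (∫ y, ∫ z, T x y z ∂μ ∂μ)
      = ∫ y, ∫ z, F x y z ∂μ ∂μ
    rw [← integral_sub (intYP x) (intY1 x)]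
    refine integral_congr_ae (ae_of_all _ fun y => ?_)
    show (∫ z, k x y * k x z ∂μ) - (∫ z, T x y z ∂μ) = ∫ z, F x y z ∂μ
    rw [← integral_sub (intzP x y) (intzT1 x y)]
    refine integral_congr_ae (ae_of_all _ fun z => ?_)
    show k x y * k x z - T x y z = F x y z
    simp only [hTdef, hFdef]
    rw [hkneg y x, hkneg z x]
    ring
  -- properties of G
  have hGm : ∀ x, Measurable fun y => G x y := by
    intro x
    simp only [hGdef]
    exact Measurable.ite
      (measurableSet_lt measurable_const
        (by fun_prop : Continuous fun y : EuclideanSpace ℝ (Fin n) => ‖x - y‖).measurable)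
      (by fun_prop) measurable_const
  have hGnn : ∀ x y, 0 ≤ G x y := by
    intro x y
    simp only [hGdef]
    by_cases h : ε < ‖x - y‖
    · rw [if_pos h]; positivity
    · rw [if_neg h]
  have hGb : ∀ x y, G x y ≤ ε ^ (-(2*α)) := by
    intro x y
    simp only [hGdef]
    by_cases h : ε < ‖x - y‖
    · rw [if_pos h]
      exact Real.rpow_le_rpow_of_nonpos hε h.le (by nlinarith)
    · rw [if_neg h]; positivity
  have hGint : ∀ x, Integrable (fun y => G x y) μ := fun x =>
    bddIntegrable μ (hGm x).aestronglyMeasurable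
      (fun y => by rw [abs_of_nonneg (hGnn x y)]; exact hGb x y)
  have hGle : ∀ x, ∫ y, G x y ∂μ ≤ (2:ℝ)^α * ε^(-α) * (1 - (2:ℝ)^(-α))⁻¹ := by
    intro x
    rw [integral_eq_lintegral_of_nonneg_ae (ae_of_all _ (hGnn x)) (hGm x).aestronglyMeasurable]
    refine ENNReal.toReal_le_of_le_ofReal ?_ ?_
    · exact mul_nonneg (mul_nonneg (Real.rpow_nonneg (by norm_num) _)
        (Real.rpow_nonneg hε.le _)) (inv_nonneg.2 (by linarith))
    · have hd := dyadicBound hα₀ hε μ hgrow x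
      simp only [hGdef]
      exact hd
  -- key pointwise estimate for the z-integral of F
  have hFz : ∀ x y, |∫ z, F x y z ∂μ| ≤ (2:ℝ)^α * ε^α * G x y := by
    intro x y
    have hc0 : (0:ℝ) ≤ (2:ℝ)^α * G x y :=
      mul_nonneg (Real.rpow_nonneg (by norm_num) _) (hGnn x y)
    have hptF : ∀ z, |F x y z|
        ≤ (Metric.closedBall y ε).indicator (fun _ => (2:ℝ)^α * G x y) z := by
      intro z
      by_cases h3 : ε < ‖y - z‖
      · have hF0 : F x y z = 0 := by
          simp only [hFdef, hedef]; rw [if_pos h3]; ring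
        rw [hF0, abs_zero]
        exact Set.indicator_nonneg (fun _ _ => hc0) z
      · have hzball : z ∈ Metric.closedBall y ε := by
          rw [Metric.mem_closedBall, dist_comm, dist_eq_norm]
          exact le_of_not_gt h3
        rw [Set.indicator_of_mem hzball]
        by_cases h1 : ε < ‖x - y‖
        · have hxy0 : (0:ℝ) < ‖x - y‖ := lt_trans hε h1
          have hGxy : G x y = ‖x - y‖ ^ (-(2*α)) := by simp only [hGdef]; rw [if_pos h1]
          by_cases h2 : ε < ‖x - z‖
          · have hxz0 : (0:ℝ) < ‖x - z‖ := lt_trans hε h2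
            have hky : |k x y| ≤ ‖x - y‖ ^ (-α) := by
              simp only [hkdef]; rw [if_pos h1]; exact kernelAbsLe hα₀ i _ hxy0
            have hkz : |k x z| ≤ ‖x - z‖ ^ (-α) := by
              simp only [hkdef]; rw [if_pos h2]; exact kernelAbsLe hα₀ i _ hxz0
            have htri : ‖x - y‖ / 2 < ‖x - z‖ := by
              have h4 := dist_triangle x z y
              rw [dist_eq_norm, dist_eq_norm, dist_eq_norm] at h4
              have h5 : ‖z - y‖ ≤ ε := by rw [norm_sub_rev]; exact le_of_not_gt h3
              linarith
            have hkz2b : ‖x - z‖ ^ (-α) ≤ (‖x - y‖ / 2) ^ (-α) :=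
              Real.rpow_le_rpow_of_nonpos (by positivity) htri.le (by linarith)
            have hdiv : (‖x - y‖ / 2) ^ (-α) = ‖x - y‖ ^ (-α) * 2 ^ α := by
              rw [Real.div_rpow hxy0.le (by norm_num : (0:ℝ) ≤ 2),
                Real.rpow_neg (by norm_num : (0:ℝ) ≤ 2), div_eq_mul_inv, inv_inv]
            have hF1 : |F x y z| = |k x y| * |k x z| := by
              simp only [hFdef, hedef]
              rw [if_neg h3, abs_mul, abs_mul]
              norm_num
            calc |F x y z| = |k x y| * |k x z| := hF1
              _ ≤ ‖x - y‖^(-α) * (‖x - y‖^(-α) * 2^α) :=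
                  mul_le_mul hky (hkz.trans (hkz2b.trans_eq hdiv)) (abs_nonneg _)
                    (by positivity)
              _ = 2^α * (‖x - y‖^(-α) * ‖x - y‖^(-α)) := by ring
              _ = 2^α * ‖x - y‖ ^ (-(2*α)) := by
                  rw [← Real.rpow_add hxy0]; ring_nf
              _ = 2^α * G x y := by rw [hGxy]
          · have hk0 : k x z = 0 := by simp only [hkdef]; rw [if_neg h2]
            have hF0 : F x y z = 0 := by simp only [hFdef]; rw [hk0]; ring
            rw [hF0, abs_zero]; exact hc0
        · have hk0 : k x y = 0 := by simp only [hkdef]; rw [if_neg h1]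
          have hF0 : F x y z = 0 := by simp only [hFdef]; rw [hk0]; ring
          rw [hF0, abs_zero]; exact hc0
    have h1 : |∫ z, F x y z ∂μ| ≤ ∫ z, |F x y z| ∂μ := by
      simpa [Real.norm_eq_abs] using norm_integral_le_integral_norm (μ := μ) (fun z => F x y z)
    have h2 : (∫ z, |F x y z| ∂μ)
        ≤ ∫ z, (Metric.closedBall y ε).indicator (fun _ => (2:ℝ)^α * G x y) z ∂μ :=
      integral_mono (intzF x y).abs
        ((integrable_const _).indicator measurableSet_closedBall) hptF
    have h3 : (∫ z, (Metric.closedBall y ε).indicator (fun _ => (2:ℝ)^α * G x y) z ∂μ)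
        = (μ (Metric.closedBall y ε)).toReal • ((2:ℝ)^α * G x y) :=
      integral_indicator_const _ measurableSet_closedBall
    have h4 : (μ (Metric.closedBall y ε)).toReal ≤ ε ^ α :=
      ENNReal.toReal_le_of_le_ofReal (Real.rpow_nonneg hε.le α) (hgrow y ε hε)
    calc |∫ z, F x y z ∂μ| ≤ (μ (Metric.closedBall y ε)).toReal • ((2:ℝ)^α * G x y) := by
          rw [← h3]; exact h1.trans h2
      _ ≤ ε^α * ((2:ℝ)^α * G x y) := by
          rw [smul_eq_mul]; exact mul_le_mul_of_nonneg_right h4 hc0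
      _ = (2:ℝ)^α * ε^α * G x y := by ring
  -- the y-integral bound
  have hFy : ∀ x, |∫ y, ∫ z, F x y z ∂μ ∂μ|
      ≤ (2:ℝ)^α * ε^α * ((2:ℝ)^α * ε^(-α) * (1 - (2:ℝ)^(-α))⁻¹) := by
    intro x
    have smFy : StronglyMeasurable fun y => ∫ z, F x y z ∂μ := by
      refine smInt1 (fun y z => F x y z) ?_
      simp only [hFdef]
      exact (measurable_const.sub heP).mul
        ((hkP.comp (measurable_const.prodMk measurable_fst)).mul
          (hkP.comp (measurable_const.prodMk measurable_snd)))
    have intH : Integrable (fun y => |∫ z, F x y z ∂μ|) μ :=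
      (bddIntegrable μ smFy.aestronglyMeasurable (fun y => hIb _ B (hFb x y))).abs
    have intG2 : Integrable (fun y => (2:ℝ)^α * ε^α * G x y) μ := (hGint x).const_mul _
    have h1 : |∫ y, ∫ z, F x y z ∂μ ∂μ| ≤ ∫ y, |∫ z, F x y z ∂μ| ∂μ := by
      simpa [Real.norm_eq_abs] using
        norm_integral_le_integral_norm (μ := μ) (fun y => ∫ z, F x y z ∂μ)
    have h2 : (∫ y, |∫ z, F x y z ∂μ| ∂μ) ≤ ∫ y, (2:ℝ)^α * ε^α * G x y ∂μ :=
      integral_mono intH intG2 (fun y => hFz x y)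
    have h3 : (∫ y, (2:ℝ)^α * ε^α * G x y ∂μ) = (2:ℝ)^α * ε^α * ∫ y, G x y ∂μ :=
      integral_const_mul _ _
    refine (h1.trans (h2.trans_eq h3)).trans ?_
    exact mul_le_mul_of_nonneg_left (hGle x) (by positivity)
  -- conclusion
  rw [hdiff]
  refine (absIntegralLeConst μ _ hFy).trans (le_of_eq ?_)
  have hεα : ε^α * ε^(-α) = 1 := by
    rw [← Real.rpow_add hε]; simp
  calc (2:ℝ)^α * ε^α * ((2:ℝ)^α * ε^(-α) * (1 - (2:ℝ)^(-α))⁻¹) * m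
      = ((2:ℝ)^α * (2:ℝ)^α * (1 - (2:ℝ)^(-α))⁻¹) * (ε^α * ε^(-α)) * m := by ring
    _ = (2:ℝ)^α * (2:ℝ)^α * (1 - (2:ℝ)^(-α))⁻¹ * m := by rw [hεα]; ring
end
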